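/- arXiv:2510.00301 — 4 statements merged into one kernel-verified Lean document; each statement's English description precedes it below -/
import Mathlib

section
/- For integers k ≥ 2 and m ≥ 4, define L(k,m) = f^{(k,k,1^m)} + f^{(k+1,k+1,1^{m−2})} + f^{(k+2,k+2,1^{m−4})}. Then: if m ≤ k, L(k,m) = f^{(k+2,k,1^{m−2})} + f^{(k,k,m)}; if m = k+1 or m = k+2, L(k,m) = f^{(k+2,k,1^{m−2})}; and if m ≥ k+3, L(k,m) = f^{(k+2,k,1^{m−2})} + f^{(m−2,k+1,k+1)}. -/
/-- A cell `c = (i, j)` lies in the Young diagram whose row lengths are given by the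
list `l` if `j < l[i]` (rows and columns indexed from `0`). -/
def InShape (l : List ℕ) (c : ℕ × ℕ) : Prop := c.2 < l.getD c.1 0

/-- `T` is a standard Young tableau of the shape with row lengths `l`: the entries give a
bijection from the cells of the shape to `{0, …, n-1}` (where `n = l.sum` is the number of
cells), entries strictly increase along rows and down columns, and `T` vanishes outside
the shape. -/
def IsSYT (l : List ℕ) (T : ℕ × ℕ → ℕ) : Prop :=
  Set.BijOn T {c : ℕ × ℕ | InShape l c} (Set.Iio l.sum) ∧
  (∀ i j, InShape l (i, j + 1) → T (i, j) < T (i, j + 1)) ∧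
  (∀ i j, InShape l (i + 1, j) → T (i, j) < T (i + 1, j)) ∧
  (∀ c, ¬ InShape l c → T c = 0)

open Classical in
/-- The number `f^l` of standard Young tableaux of shape `l`, defined to be `0` when `l`
is not a partition (i.e. not weakly decreasing). -/
noncomputable def fSYT (l : List ℕ) : ℕ :=
  if List.Pairwise (· ≥ ·) l then Nat.card {T : ℕ × ℕ → ℕ // IsSYT l T} else 0

/-- `f^{(a,b,1^t)}` with an integer number `t` of trailing parts equal to `1`;
it is `0` whenever `t < 0` or the resulting list is not a partition. -/
noncomputable def fHook (a b : ℕ) (t : ℤ) : ℕ :=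
  if 0 ≤ t then fSYT (a :: b :: List.replicate t.toNat 1) else 0

/-- `f^{(r,s,t)}` for integers `r`, `s`, `t`; it is `0` whenever `(r,s,t)` is not
a partition. -/
noncomputable def f3 (r s t : ℤ) : ℕ :=
  if 0 ≤ r ∧ 0 ≤ s ∧ 0 ≤ t then fSYT [r.toNat, s.toNat, t.toNat] else 0

namespace SYTAux

lemma getD_default {l : List ℕ} {i : ℕ} (h : l.length ≤ i) : l.getD i 0 = 0 := by
  simp [List.getD_eq_getElem?_getD, List.getElem?_eq_none h]

lemma getD_get {l : List ℕ} {i : ℕ} (h : i < l.length) : l.getD i 0 = l[i] := by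
  simp [List.getD_eq_getElem?_getD, List.getElem?_eq_getElem h]

lemma getD_le_sum (l : List ℕ) (i : ℕ) : l.getD i 0 ≤ l.sum := by
  rcases lt_or_ge i l.length with h | h
  · rw [getD_get h]; exact List.le_sum_of_mem (l.getElem_mem _)
  · rw [getD_default h]; exact Nat.zero_le _

lemma inShape_lt_length {l : List ℕ} {c : ℕ × ℕ} (h : InShape l c) : c.1 < l.length := by
  by_contra hc
  rw [InShape, getD_default (not_lt.mp hc)] at h; omega

lemma inShape_lt_sum {l : List ℕ} {c : ℕ × ℕ} (h : InShape l c) : c.2 < l.sum :=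
  lt_of_lt_of_le h (getD_le_sum l c.1)

lemma shape_finite (l : List ℕ) : {c : ℕ × ℕ | InShape l c}.Finite := by
  apply Set.Finite.subset ((Set.finite_Iio l.length).prod (Set.finite_Iio l.sum))
  rintro ⟨i, j⟩ h
  exact ⟨inShape_lt_length h, inShape_lt_sum h⟩

lemma isSYT_finite (l : List ℕ) : {T : ℕ × ℕ → ℕ | IsSYT l T}.Finite := by
  classical
  have hs := shape_finite l
  haveI := hs.to_subtype
  apply Set.Finite.of_finite_image (f := fun T => ({c : ℕ × ℕ | InShape l c}).restrict T)
  · apply Set.Finite.subset (Set.Finite.pi (fun _ : {c : ℕ × ℕ | InShape l c} => Set.finite_Iio l.sum))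
    rintro g ⟨T, hT, rfl⟩
    intro x _
    exact hT.1.mapsTo x.2
  · intro T1 h1 T2 h2 h
    funext c
    by_cases hc : InShape l c
    · exact congrFun h ⟨c, hc⟩
    · rw [h1.2.2.2 c hc, h2.2.2.2 c hc]

instance isSYT_finite' (l : List ℕ) : Finite {T : ℕ × ℕ → ℕ // IsSYT l T} :=
  (isSYT_finite l).to_subtype

lemma fSYT_eq_ncard {l : List ℕ} (h : List.Pairwise (· ≥ ·) l) :
    fSYT l = {T : ℕ × ℕ → ℕ | IsSYT l T}.ncard := by
  rw [fSYT, if_pos h, ← Nat.card_coe_set_eq]; rfl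

end SYTAux

namespace SYTAux

def Corner (l : List ℕ) (i : ℕ) : Prop := l.getD (i + 1) 0 < l.getD i 0

instance (l : List ℕ) (i : ℕ) : Decidable (Corner l i) := by unfold Corner; infer_instance

lemma sorted_iff_getD {l : List ℕ} :
    List.Pairwise (· ≥ ·) l ↔ ∀ i, l.getD (i + 1) 0 ≤ l.getD i 0 := by
  constructor
  · intro h i
    rcases lt_or_ge (i + 1) l.length with hi | hi
    · rw [getD_get hi, getD_get (by omega)]
      exact List.pairwise_iff_get.mp h ⟨i, by omega⟩ ⟨i + 1, hi⟩ (by simp)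
    · rw [getD_default hi]; exact Nat.zero_le _
  · intro h
    rw [← List.isChain_iff_pairwise, List.isChain_iff_getElem]
    intro i hi
    have := h i
    rwa [getD_get (by omega), getD_get (by omega)] at this

lemma corner_lt_length {l : List ℕ} {i : ℕ} (h : Corner l i) : i < l.length := by
  by_contra hc
  have h1 : l.getD i 0 = 0 := getD_default (by omega)
  rw [Corner, h1] at h; omega

lemma fSYT_sum_zero {l : List ℕ} (hsort : List.Pairwise (· ≥ ·) l) (h : l.sum = 0) :
    fSYT l = 1 := by
  have hsh : ∀ c, ¬ InShape l c := by
    intro c hc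
    have := inShape_lt_sum hc; omega
  have : {T : ℕ × ℕ → ℕ | IsSYT l T} = {fun _ => 0} := by
    ext T
    simp only [Set.mem_setOf_eq, Set.mem_singleton_iff]
    constructor
    · intro hT; funext c; exact hT.2.2.2 c (hsh c)
    · rintro rfl
      refine ⟨?_, ?_, ?_, fun _ _ => rfl⟩
      · have h1 : {c : ℕ × ℕ | InShape l c} = ∅ := by
          ext c; simp only [Set.mem_setOf_eq, Set.mem_empty_iff_false, iff_false]; exact hsh c
        have h2 : Set.Iio l.sum = (∅ : Set ℕ) := by rw [h]; ext x; simp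
        rw [h1, h2]; exact Set.bijOn_empty _
      · intro i j hc; exact absurd hc (hsh _)
      · intro i j hc; exact absurd hc (hsh _)
  rw [fSYT_eq_ncard hsort, this, Set.ncard_singleton]

lemma getD_append_zero (l : List ℕ) (i : ℕ) : (l ++ [0]).getD i 0 = l.getD i 0 := by
  rcases lt_or_ge i l.length with h | h
  · rw [getD_get (by simp; omega), getD_get h, List.getElem_append_left h]
  · rw [getD_default (l := l) h]
    rcases lt_or_ge i (l ++ [0]).length with h2 | h2
    · rw [getD_get h2, List.getElem_append_right h]
      simp
    · rw [getD_default h2]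

lemma fSYT_append_zero (l : List ℕ) : fSYT (l ++ [0]) = fSYT l := by
  have hsh : InShape (l ++ [0]) = InShape l := by
    funext c
    show (c.2 < (l ++ [0]).getD c.1 0) = (c.2 < l.getD c.1 0)
    rw [getD_append_zero]
  have hsum : (l ++ [0]).sum = l.sum := by simp
  have hsyt : IsSYT (l ++ [0]) = IsSYT l := by
    unfold IsSYT; rw [hsh, hsum]
  have hsort : List.Pairwise (· ≥ ·) (l ++ [0]) ↔ List.Pairwise (· ≥ ·) l := by
    rw [sorted_iff_getD, sorted_iff_getD]
    constructor <;> intro h i <;> have := h i <;>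
      simp only [getD_append_zero] at this ⊢ <;> exact this
  unfold fSYT
  by_cases h : List.Pairwise (· ≥ ·) l
  · rw [if_pos h, if_pos (hsort.mpr h), hsyt]
  · rw [if_neg h, if_neg (fun hh => h (hsort.mp hh))]

end SYTAux

namespace SYTAux

lemma set_getD_self {l : List ℕ} {i v : ℕ} (h : i < l.length) :
    (l.set i v).getD i 0 = v := by
  rw [getD_get (by rwa [List.length_set])]
  simp [List.getElem_set_self, h]

lemma set_getD_ne {l : List ℕ} {i v j : ℕ} (h : j ≠ i) :
    (l.set i v).getD j 0 = l.getD j 0 := by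
  simp [List.getD_eq_getElem?_getD, List.getElem?_set_ne (Ne.symm h)]

lemma corner_pos {l : List ℕ} {i : ℕ} (h : Corner l i) : 0 < l.getD i 0 :=
  lt_of_le_of_lt (Nat.zero_le _) h

lemma sorted_set {l : List ℕ} {i : ℕ} (hsort : List.Pairwise (· ≥ ·) l) (hc : Corner l i) :
    List.Pairwise (· ≥ ·) (l.set i (l.getD i 0 - 1)) := by
  rw [sorted_iff_getD]
  intro j
  have hlen := corner_lt_length hc
  have hc' : l.getD (i + 1) 0 < l.getD i 0 := hc
  have hs1 := sorted_iff_getD.mp hsort j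
  rcases eq_or_ne j i with rfl | hji
  · rw [set_getD_self hlen, set_getD_ne (show j + 1 ≠ j by omega)]
    omega
  · rcases eq_or_ne (j + 1) i with hj1 | hj1
    · subst hj1
      rw [set_getD_ne hji, set_getD_self hlen]
      omega
    · rw [set_getD_ne hji, set_getD_ne hj1]
      exact hs1

lemma sum_set_corner {l : List ℕ} {i : ℕ} (hc : Corner l i) :
    (l.set i (l.getD i 0 - 1)).sum + 1 = l.sum := by
  have hlen := corner_lt_length hc
  have hpos := corner_pos hc
  have hget : l.getD i 0 = l[i] := getD_get hlen
  have h0 : l.sum = (l.take i).sum + (l[i] + (l.drop (i + 1)).sum) := by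
    conv_lhs => rw [← List.take_append_drop i l]
    rw [List.sum_append, List.drop_eq_getElem_cons hlen, List.sum_cons]
  rw [List.sum_set, if_pos hlen, h0]
  omega

lemma inShape_set_iff {l : List ℕ} {i : ℕ} (hc : Corner l i) (c : ℕ × ℕ) :
    InShape (l.set i (l.getD i 0 - 1)) c ↔ InShape l c ∧ c ≠ (i, l.getD i 0 - 1) := by
  obtain ⟨r, j⟩ := c
  have hlen := corner_lt_length hc
  have hpos := corner_pos hc
  show (j < (l.set i (l.getD i 0 - 1)).getD r 0) ↔
    (j < l.getD r 0 ∧ ((r, j) : ℕ × ℕ) ≠ (i, l.getD i 0 - 1))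
  rcases eq_or_ne r i with rfl | hri
  · rw [set_getD_self hlen]
    constructor
    · intro h
      refine ⟨by omega, fun heq => ?_⟩
      have h2 : j = l.getD r 0 - 1 := congrArg Prod.snd heq
      omega
    · rintro ⟨h1, h2⟩
      rcases eq_or_ne j (l.getD r 0 - 1) with heq | hne
      · exact absurd (by rw [heq]) h2
      · omega
  · rw [set_getD_ne hri]
    exact ⟨fun h => ⟨h, fun heq => hri (congrArg Prod.fst heq)⟩, fun h => h.1⟩

lemma inShape_mono_row {l : List ℕ} (hsort : List.Pairwise (· ≥ ·) l) {r j : ℕ}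
    (h : InShape l (r + 1, j)) : InShape l (r, j) :=
  lt_of_lt_of_le h (sorted_iff_getD.mp hsort r)

lemma inShape_mono_col {l : List ℕ} {r j : ℕ} (h : InShape l (r, j + 1)) :
    InShape l (r, j) := lt_trans (by omega) h

lemma exists_corner_max {l : List ℕ} {n : ℕ} {T : ℕ × ℕ → ℕ}
    (hsum : l.sum = n + 1) (hT : IsSYT l T) :
    ∃ i, Corner l i ∧ T (i, l.getD i 0 - 1) = n := by
  obtain ⟨c, hcs, hcv⟩ := hT.1.surjOn (show n ∈ Set.Iio l.sum by rw [hsum]; exact lt_add_one n)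
  obtain ⟨r, j⟩ := c
  have hnr : ¬ InShape l (r, j + 1) := by
    intro hin
    have h2 := hT.2.1 r j hin
    have h3 : T (r, j + 1) < l.sum := hT.1.mapsTo hin
    rw [hcv] at h2; omega
  have hnd : ¬ InShape l (r + 1, j) := by
    intro hin
    have h2 := hT.2.2.1 r j hin
    have h3 : T (r + 1, j) < l.sum := hT.1.mapsTo hin
    rw [hcv] at h2; omega
  have hcs' : j < l.getD r 0 := hcs
  unfold InShape at hnr hnd
  simp only [not_lt] at hnr hnd
  refine ⟨r, ?_, ?_⟩
  · unfold Corner; omega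
  · have : j = l.getD r 0 - 1 := by omega
    rw [← this]; exact hcv

lemma max_unique {l : List ℕ} {n : ℕ} {T : ℕ × ℕ → ℕ}
    (hT : IsSYT l T) {i i' : ℕ} (hci : Corner l i) (hci' : Corner l i')
    (hvi : T (i, l.getD i 0 - 1) = n) (hvi' : T (i', l.getD i' 0 - 1) = n) : i = i' := by
  have h1 : InShape l (i, l.getD i 0 - 1) := by
    have := corner_pos hci
    show l.getD i 0 - 1 < l.getD i 0
    omega
  have h2 : InShape l (i', l.getD i' 0 - 1) := by
    have := corner_pos hci'
    show l.getD i' 0 - 1 < l.getD i' 0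
    omega
  have := hT.1.injOn h1 h2 (by rw [hvi, hvi'])
  exact (Prod.mk.injEq _ _ _ _ ▸ this).1

lemma ncard_corner {l : List ℕ} {n i : ℕ} (hsort : List.Pairwise (· ≥ ·) l)
    (hsum : l.sum = n + 1) (hc : Corner l i) :
    {T : ℕ × ℕ → ℕ | IsSYT l T ∧ T (i, l.getD i 0 - 1) = n}.ncard
      = fSYT (l.set i (l.getD i 0 - 1)) := by
  have hlen := corner_lt_length hc
  have hpos := corner_pos hc
  set a := l.getD i 0 with ha
  set cell : ℕ × ℕ := (i, a - 1) with hcelldef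
  set l' := l.set i (a - 1) with hl'
  have hsort' : List.Pairwise (· ≥ ·) l' := sorted_set hsort hc
  have hsum' : l'.sum = n := by
    have h := sum_set_corner hc
    rw [← ha] at h
    rw [← hl'] at h
    omega
  have hshape' : ∀ c, InShape l' c ↔ InShape l c ∧ c ≠ cell := inShape_set_iff hc
  have hcellin : InShape l cell := by
    show a - 1 < l.getD i 0
    omega
  rw [fSYT_eq_ncard hsort']
  set Φ : (ℕ × ℕ → ℕ) → (ℕ × ℕ → ℕ) := fun T c => if c = cell then 0 else T c with hΦ
  have hinj : Set.InjOn Φ {T : ℕ × ℕ → ℕ | IsSYT l T ∧ T cell = n} := by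
    rintro T1 ⟨h1, hv1⟩ T2 ⟨h2, hv2⟩ heq
    funext c
    rcases eq_or_ne c cell with rfl | hne
    · rw [hv1, hv2]
    · have := congrFun heq c
      simpa [Φ, if_neg hne] using this
  have himg : Φ '' {T : ℕ × ℕ → ℕ | IsSYT l T ∧ T cell = n} = {T : ℕ × ℕ → ℕ | IsSYT l' T} := by
    ext T'
    constructor
    · rintro ⟨T, ⟨hT, hTv⟩, rfl⟩
      have hval : ∀ c, c ≠ cell → Φ T c = T c := fun c hc => if_neg hc
      refine ⟨⟨?_, ?_, ?_⟩, ?_, ?_, ?_⟩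
      · -- MapsTo
        intro c hcs
        obtain ⟨hcl, hcne⟩ := (hshape' c).mp hcs
        rw [hsum', Set.mem_Iio]
        rw [Set.mem_setOf_eq] at hcs
        rw [hval c hcne]
        have h1 : T c < l.sum := hT.1.mapsTo hcl
        rcases lt_or_ge (T c) n with h | h
        · exact h
        · exfalso
          have : T c = n := by omega
          exact hcne (hT.1.injOn hcl hcellin (by rw [this, hTv]))
      · -- InjOn
        intro c1 hc1 c2 hc2 heq
        obtain ⟨hc1l, hc1ne⟩ := (hshape' c1).mp hc1
        obtain ⟨hc2l, hc2ne⟩ := (hshape' c2).mp hc2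
        rw [hval c1 hc1ne, hval c2 hc2ne] at heq
        exact hT.1.injOn hc1l hc2l heq
      · -- SurjOn
        intro y hy
        rw [hsum', Set.mem_Iio] at hy
        obtain ⟨c, hcl, hcv⟩ := hT.1.surjOn (show y ∈ Set.Iio l.sum by rw [hsum]; exact Set.mem_Iio.mpr (by omega))
        have hcne : c ≠ cell := by
          intro h; rw [h, hTv] at hcv; omega
        exact ⟨c, (hshape' c).mpr ⟨hcl, hcne⟩, by rw [hval c hcne]; exact hcv⟩
      · -- rows
        intro r j hin
        obtain ⟨hl1, hne1⟩ := (hshape' (r, j + 1)).mp hin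
        have hin0 : InShape l' (r, j) := by
          refine (hshape' (r, j)).mpr ⟨inShape_mono_col hl1, ?_⟩
          intro h
          rw [hcelldef] at h
          have h1 : r = i ∧ j = a - 1 := by
            constructor <;> [exact congrArg Prod.fst h; exact congrArg Prod.snd h]
          obtain ⟨rfl, rfl⟩ := h1
          have : InShape l' (r, (a - 1) + 1) := hin
          rw [hshape' _] at this
          obtain ⟨h2, _⟩ := this
          unfold InShape at h2
          simp only at h2
          omega
        obtain ⟨_, hne0⟩ := (hshape' (r, j)).mp hin0
        rw [hval _ hne0, hval _ hne1]
        exact hT.2.1 r j hl1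
      · -- cols
        intro r j hin
        obtain ⟨hl1, hne1⟩ := (hshape' (r + 1, j)).mp hin
        have hin0 : InShape l' (r, j) := by
          refine (hshape' (r, j)).mpr ⟨inShape_mono_row hsort hl1, ?_⟩
          intro h
          have h1 : r = i ∧ j = a - 1 := by
            rw [hcelldef] at h
            constructor <;> [exact congrArg Prod.fst h; exact congrArg Prod.snd h]
          obtain ⟨rfl, rfl⟩ := h1
          -- InShape l (r+1, a-1) but Corner: getD (r+1) ≤ a - 1
          have h2 : l.getD (r + 1) 0 ≤ a - 1 := by
            have := hc; unfold Corner at this; omega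
          unfold InShape at hl1
          simp only at hl1
          omega
        obtain ⟨_, hne0⟩ := (hshape' (r, j)).mp hin0
        rw [hval _ hne0, hval _ hne1]
        exact hT.2.2.1 r j hl1
      · -- zero outside
        intro c hc0
        rcases eq_or_ne c cell with rfl | hne
        · exact if_pos rfl
        · rw [hval c hne]
          refine hT.2.2.2 c ?_
          intro hcl
          exact hc0 ((hshape' c).mpr ⟨hcl, hne⟩)
    · rintro hT'
      rw [Set.mem_setOf_eq] at hT'
      set T : ℕ × ℕ → ℕ := fun c => if c = cell then n else T' c with hTdef
      have hcellout : ¬ InShape l' cell := by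
        rw [hshape' cell]; rintro ⟨_, h⟩; exact h rfl
      have hTval : ∀ c, c ≠ cell → T c = T' c := fun c hc => if_neg hc
      have hTcell : T cell = n := if_pos rfl
      have hT'lt : ∀ c, InShape l' c → T' c < n := by
        intro c hcl
        have := hT'.1.mapsTo hcl
        rwa [hsum', Set.mem_Iio] at this
      refine ⟨T, ⟨⟨⟨?_, ?_, ?_⟩, ?_, ?_, ?_⟩, hTcell⟩, ?_⟩
      · -- MapsTo
        intro c hcl
        rw [hsum, Set.mem_Iio]
        rcases eq_or_ne c cell with rfl | hne
        · rw [hTcell]; omega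
        · rw [hTval c hne]
          have := hT'lt c ((hshape' c).mpr ⟨hcl, hne⟩)
          omega
      · -- InjOn
        intro c1 hc1 c2 hc2 heq
        rcases eq_or_ne c1 cell with rfl | hne1 <;> rcases eq_or_ne c2 cell with rfl | hne2
        · rfl
        · rw [hTcell, hTval c2 hne2] at heq
          have := hT'lt c2 ((hshape' c2).mpr ⟨hc2, hne2⟩); omega
        · rw [hTcell, hTval c1 hne1] at heq
          have := hT'lt c1 ((hshape' c1).mpr ⟨hc1, hne1⟩); omega
        · rw [hTval c1 hne1, hTval c2 hne2] at heq
          exact hT'.1.injOn ((hshape' c1).mpr ⟨hc1, hne1⟩) ((hshape' c2).mpr ⟨hc2, hne2⟩) heq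
      · -- SurjOn
        intro y hy
        rw [hsum, Set.mem_Iio] at hy
        rcases eq_or_ne y n with rfl | hne
        · exact ⟨cell, hcellin, hTcell⟩
        · obtain ⟨c, hcl', hcv⟩ := hT'.1.surjOn (show y ∈ Set.Iio l'.sum by rw [hsum']; exact Set.mem_Iio.mpr (by omega))
          obtain ⟨hcl, hcne⟩ := (hshape' c).mp hcl'
          exact ⟨c, hcl, by rw [hTval c hcne]; exact hcv⟩
      · -- rows
        intro r j hin
        rcases eq_or_ne ((r, j + 1) : ℕ × ℕ) cell with hEq | hne
        · have h1 : r = i ∧ j + 1 = a - 1 := by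
            rw [hcelldef] at hEq
            constructor <;> [exact congrArg Prod.fst hEq; exact congrArg Prod.snd hEq]
          obtain ⟨rfl, hj⟩ := h1
          have hin0 : InShape l' (r, j) := by
            unfold InShape
            simp only
            rw [hl', ha, set_getD_self hlen]
            omega
          rw [hEq, hTcell, hTval (r, j) (by rw [hcelldef]; intro h; have := congrArg Prod.snd h; simp at this; omega)]
          exact hT'lt _ hin0
        · have hne0 : ((r, j) : ℕ × ℕ) ≠ cell := by
            rw [hcelldef]; intro h
            have h1 : r = i ∧ j = a - 1 := by
              constructor <;> [exact congrArg Prod.fst h; exact congrArg Prod.snd h]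
            obtain ⟨rfl, rfl⟩ := h1
            unfold InShape at hin
            simp only at hin
            have : ((r, a - 1 + 1) : ℕ × ℕ) ≠ cell := hne
            omega
          rw [hTval _ hne0, hTval _ hne]
          refine hT'.2.1 r j ((hshape' _).mpr ⟨hin, hne⟩)
      · -- cols
        intro r j hin
        rcases eq_or_ne ((r + 1, j) : ℕ × ℕ) cell with hEq | hne
        · have h1 : r + 1 = i ∧ j = a - 1 := by
            rw [hcelldef] at hEq
            constructor <;> [exact congrArg Prod.fst hEq; exact congrArg Prod.snd hEq]
          obtain ⟨hri, rfl⟩ := h1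
          have hin0 : InShape l' (r, a - 1) := by
            refine (hshape' _).mpr ⟨?_, ?_⟩
            · unfold InShape
              simp only
              have h2 : l.getD i 0 ≤ l.getD r 0 := by
                have := sorted_iff_getD.mp hsort r
                rw [← hri] at *
                omega
              omega
            · rw [hcelldef]
              intro h
              have := congrArg Prod.fst h
              simp only at this
              omega
          rw [hEq, hTcell, hTval (r, a - 1) (by
            rw [hcelldef]; intro h
            have := congrArg Prod.fst h
            simp only at this
            omega)]
          exact hT'lt _ hin0
        · have hne0 : ((r, j) : ℕ × ℕ) ≠ cell := by
            rw [hcelldef]; intro h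
            have h1 : r = i ∧ j = a - 1 := by
              constructor <;> [exact congrArg Prod.fst h; exact congrArg Prod.snd h]
            obtain ⟨rfl, rfl⟩ := h1
            unfold InShape at hin
            simp only at hin
            have h2 := hc
            unfold Corner at h2
            omega
          rw [hTval _ hne0, hTval _ hne]
          refine hT'.2.2.1 r j ((hshape' _).mpr ⟨?_, hne⟩)
          exact lt_of_lt_of_le hin (by
            have := sorted_iff_getD.mp hsort r
            exact le_refl _ |>.trans (le_refl _)) |>.trans_le (le_refl _)
      · -- zero outside
        intro c hc0
        have hne : c ≠ cell := fun h => hc0 (h ▸ hcellin)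
        rw [hTval c hne]
        refine hT'.2.2.2 c ?_
        intro hcl'
        exact hc0 ((hshape' c).mp hcl').1
      · -- Φ T = T'
        funext c
        rcases eq_or_ne c cell with rfl | hne
        · show (if cell = cell then 0 else T cell) = T' cell
          rw [if_pos rfl]
          exact (hT'.2.2.2 cell hcellout).symm
        · show (if c = cell then 0 else T c) = T' c
          rw [if_neg hne, hTval c hne]
  rw [← himg, Set.ncard_image_of_injOn hinj]

end SYTAux

namespace SYTAux

lemma fSYT_three {l : List ℕ} (hsort : List.Pairwise (· ≥ ·) l) {n : ℕ}
    (hsum : l.sum = n + 1) {i1 i2 i3 : ℕ}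
    (h12 : i1 ≠ i2) (h13 : i1 ≠ i3) (h23 : i2 ≠ i3)
    (hall : ∀ i, Corner l i → i = i1 ∨ i = i2 ∨ i = i3) :
    fSYT l = (if Corner l i1 then fSYT (l.set i1 (l.getD i1 0 - 1)) else 0)
           + (if Corner l i2 then fSYT (l.set i2 (l.getD i2 0 - 1)) else 0)
           + (if Corner l i3 then fSYT (l.set i3 (l.getD i3 0 - 1)) else 0) := by
  set S : ℕ → Set (ℕ × ℕ → ℕ) :=
    fun i => {T | IsSYT l T ∧ Corner l i ∧ T (i, l.getD i 0 - 1) = n} with hS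
  have hsub : ∀ i, S i ⊆ {T | IsSYT l T} := fun i T hT => hT.1
  have hfin : ∀ i, (S i).Finite := fun i => (isSYT_finite l).subset (hsub i)
  have hdisj : ∀ i j, i ≠ j → Disjoint (S i) (S j) := by
    intro i j hij
    rw [Set.disjoint_left]
    rintro T ⟨hT, hci, hvi⟩ ⟨_, hcj, hvj⟩
    exact hij (max_unique hT hci hcj hvi hvj)
  have hcover : {T : ℕ × ℕ → ℕ | IsSYT l T} = S i1 ∪ S i2 ∪ S i3 := by
    ext T
    simp only [Set.mem_union, hS, Set.mem_setOf_eq]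
    constructor
    · intro hT
      obtain ⟨i, hci, hvi⟩ := exists_corner_max hsum hT
      rcases hall i hci with rfl | rfl | rfl
      · exact Or.inl (Or.inl ⟨hT, hci, hvi⟩)
      · exact Or.inl (Or.inr ⟨hT, hci, hvi⟩)
      · exact Or.inr ⟨hT, hci, hvi⟩
    · rintro ((⟨h, _⟩ | ⟨h, _⟩) | ⟨h, _⟩) <;> exact h
  have hcard : ∀ i, (S i).ncard = (if Corner l i then fSYT (l.set i (l.getD i 0 - 1)) else 0) := by
    intro i
    by_cases hci : Corner l i
    · rw [if_pos hci, ← ncard_corner hsort hsum hci]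
      congr 1
      ext T
      simp only [hS, Set.mem_setOf_eq]
      tauto
    · rw [if_neg hci]
      have : S i = ∅ := by
        ext T
        simp only [hS, Set.mem_setOf_eq, Set.mem_empty_iff_false, iff_false]
        rintro ⟨_, h, _⟩
        exact hci h
      rw [this, Set.ncard_empty]
  rw [fSYT_eq_ncard hsort, hcover,
    Set.ncard_union_eq (Set.disjoint_union_left.mpr ⟨hdisj _ _ h13, hdisj _ _ h23⟩)
      ((hfin i1).union (hfin i2)) (hfin i3),
    Set.ncard_union_eq (hdisj _ _ h12) (hfin i1) (hfin i2), hcard i1, hcard i2, hcard i3]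

end SYTAux

namespace SYTAux

lemma getD_hook (a b t i : ℕ) :
    (a :: b :: List.replicate t 1).getD (i + 2) 0 = if i < t then 1 else 0 := by
  rcases lt_or_ge i t with h | h
  · rw [getD_get (by simp [List.length_replicate]; omega), if_pos h]
    simp [List.getElem_cons_succ, List.getElem_replicate]
  · rw [getD_default (by simp [List.length_replicate]; omega), if_neg (by omega)]

lemma sum_hook (a b t : ℕ) : (a :: b :: List.replicate t 1).sum = a + b + t := by
  simp [List.sum_replicate, smul_eq_mul]
  omega

lemma sorted_hook {a b t : ℕ} (hb : 1 ≤ b) (hba : b ≤ a) :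
    List.Pairwise (· ≥ ·) (a :: b :: List.replicate t 1) := by
  rw [sorted_iff_getD]
  intro i
  rcases i with _ | i
  · exact hba
  rcases i with _ | i
  · show (a :: b :: List.replicate t 1).getD (0 + 2) 0 ≤ b
    rw [getD_hook]
    split_ifs <;> omega
  · show (a :: b :: List.replicate t 1).getD ((i + 1) + 2) 0
      ≤ (a :: b :: List.replicate t 1).getD (i + 2) 0
    rw [getD_hook, getD_hook]
    split_ifs <;> omega

lemma replicate_set (u : ℕ) :
    (List.replicate (u + 1) (1 : ℕ)).set u 0 = List.replicate u 1 ++ [0] := by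
  induction u with
  | zero => rfl
  | succ v ih =>
      rw [List.replicate_succ]
      show (1 : ℕ) :: (List.replicate (v + 1) 1).set v 0 = _
      rw [ih]
      simp [List.replicate_succ]

lemma fSYT_three_row {r s t : ℕ} (hts : t ≤ s) (hsr : s ≤ r) (hr : 1 ≤ r) :
    fSYT [r, s, t] = (if s < r then fSYT [r - 1, s, t] else 0)
      + (if t < s then fSYT [r, s - 1, t] else 0)
      + (if 0 < t then fSYT [r, s, t - 1] else 0) := by
  have hsort : List.Pairwise (· ≥ ·) [r, s, t] := by
    rw [sorted_iff_getD]
    intro i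
    rcases i with _ | (_ | (_ | i))
    · exact hsr
    · exact hts
    · show (0 : ℕ) ≤ t; omega
    · show ([r, s, t].getD (i + 4) 0) ≤ [r, s, t].getD (i + 3) 0
      rw [getD_default (by simp), getD_default (by simp)]
  have hsum : [r, s, t].sum = (r + s + t - 1) + 1 := by simp; omega
  have hall : ∀ i, Corner [r, s, t] i → i = 0 ∨ i = 1 ∨ i = 2 := by
    intro i hci
    by_contra hcon
    push_neg at hcon
    obtain ⟨h0, h1, h2⟩ := hcon
    have hi3 : 3 ≤ i := by omega
    have hz : [r, s, t].getD i 0 = 0 := getD_default (by simp; omega)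
    have := hci
    unfold Corner at this
    omega
  have key := fSYT_three hsort hsum (i1 := 0) (i2 := 1) (i3 := 2)
    (by omega) (by omega) (by omega) hall
  have e1 : (if Corner [r, s, t] 0 then fSYT ([r, s, t].set 0 ([r, s, t].getD 0 0 - 1)) else 0)
      = (if s < r then fSYT [r - 1, s, t] else 0) := by
    by_cases h : s < r
    · rw [if_pos (show Corner [r, s, t] 0 from h), if_pos h]; rfl
    · rw [if_neg (show ¬ Corner [r, s, t] 0 from h), if_neg h]
  have e2 : (if Corner [r, s, t] 1 then fSYT ([r, s, t].set 1 ([r, s, t].getD 1 0 - 1)) else 0)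
      = (if t < s then fSYT [r, s - 1, t] else 0) := by
    by_cases h : t < s
    · rw [if_pos (show Corner [r, s, t] 1 from h), if_pos h]; rfl
    · rw [if_neg (show ¬ Corner [r, s, t] 1 from h), if_neg h]
  have e3 : (if Corner [r, s, t] 2 then fSYT ([r, s, t].set 2 ([r, s, t].getD 2 0 - 1)) else 0)
      = (if 0 < t then fSYT [r, s, t - 1] else 0) := by
    by_cases h : 0 < t
    · rw [if_pos (show Corner [r, s, t] 2 from h), if_pos h]; rfl
    · rw [if_neg (show ¬ Corner [r, s, t] 2 from h), if_neg h]
  rw [key, e1, e2, e3]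

lemma fSYT_hook_rec {a b u : ℕ} (hb : 1 ≤ b) (hba : b ≤ a) :
    fSYT (a :: b :: List.replicate (u + 2) 1)
      = (if b < a then fSYT ((a - 1) :: b :: List.replicate (u + 2) 1) else 0)
      + (if 1 < b then fSYT (a :: (b - 1) :: List.replicate (u + 2) 1) else 0)
      + fSYT (a :: b :: List.replicate (u + 1) 1) := by
  have hsort := sorted_hook (t := u + 2) hb hba
  have hsum : (a :: b :: List.replicate (u + 2) 1).sum = (a + b + u + 1) + 1 := by
    rw [sum_hook]; omega
  have hall : ∀ i, Corner (a :: b :: List.replicate (u + 2) 1) i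
      → i = 0 ∨ i = 1 ∨ i = u + 3 := by
    intro i hci
    by_contra hcon
    push_neg at hcon
    obtain ⟨h0, h1, h2⟩ := hcon
    obtain ⟨j, rfl⟩ : ∃ j, i = j + 2 := ⟨i - 2, by omega⟩
    have hc' : (a :: b :: List.replicate (u + 2) 1).getD ((j + 1) + 2) 0
        < (a :: b :: List.replicate (u + 2) 1).getD (j + 2) 0 := hci
    rw [getD_hook, getD_hook] at hc'
    split_ifs at hc' <;> omega
  have key := fSYT_three hsort hsum (i1 := 0) (i2 := 1) (i3 := u + 3)
    (by omega) (by omega) (by omega) hall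
  set L := a :: b :: List.replicate (u + 2) 1 with hL
  have e1 : (if Corner L 0 then fSYT (L.set 0 (L.getD 0 0 - 1)) else 0)
      = (if b < a then fSYT ((a - 1) :: b :: List.replicate (u + 2) 1) else 0) := by
    by_cases h : b < a
    · rw [if_pos (show Corner L 0 from h), if_pos h]; rfl
    · rw [if_neg (show ¬ Corner L 0 from h), if_neg h]
  have e2 : (if Corner L 1 then fSYT (L.set 1 (L.getD 1 0 - 1)) else 0)
      = (if 1 < b then fSYT (a :: (b - 1) :: List.replicate (u + 2) 1) else 0) := by
    have hcor : Corner L 1 ↔ 1 < b := by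
      unfold Corner
      rw [hL, show ((1 : ℕ) + 1) = 0 + 2 from rfl, getD_hook, if_pos (by omega)]
      exact Iff.rfl
    by_cases h : 1 < b
    · rw [if_pos (hcor.mpr h), if_pos h]; rfl
    · rw [if_neg (fun hh => h (hcor.mp hh)), if_neg h]
  have e3 : (if Corner L (u + 3) then fSYT (L.set (u + 3) (L.getD (u + 3) 0 - 1)) else 0)
      = fSYT (a :: b :: List.replicate (u + 1) 1) := by
    have hcor : Corner L (u + 3) := by
      unfold Corner
      rw [hL, show (u + 3 + 1) = (u + 2) + 2 from rfl, getD_hook, if_neg (by omega),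
        show (u + 3) = (u + 1) + 2 from rfl, getD_hook, if_pos (by omega)]
      omega
    rw [if_pos hcor]
    have hgd : L.getD (u + 3) 0 = 1 := by
      rw [hL, show (u + 3) = (u + 1) + 2 from rfl, getD_hook, if_pos (by omega)]
    rw [hgd]
    have hset : L.set (u + 3) (1 - 1)
        = (a :: b :: List.replicate (u + 1) 1) ++ [0] := by
      rw [hL]
      show a :: b :: (List.replicate (u + 2) 1).set (u + 1) 0 = _
      rw [replicate_set]
      rfl
    rw [hset, fSYT_append_zero]
  rw [key, e1, e2, e3]

end SYTAux

namespace SYTAux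

noncomputable def Fq3 (r s t : ℕ) : ℚ :=
  (Nat.factorial (r + s + t) : ℚ) * ((r : ℚ) - s + 1) * ((s : ℚ) - t + 1) * ((r : ℚ) - t + 2)
    / ((Nat.factorial (r + 2) : ℚ) * (Nat.factorial (s + 1) : ℚ) * (Nat.factorial t : ℚ))

noncomputable def Fqh (a b t : ℕ) : ℚ :=
  (Nat.factorial (a + b + t) : ℚ) * ((a : ℚ) - b + 1)
    / (((a : ℚ) + t + 1) * ((b : ℚ) + t) * (Nat.factorial a : ℚ) * (Nat.factorial (b - 1) : ℚ)
        * (Nat.factorial t : ℚ))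

lemma fac_ne (k : ℕ) : (Nat.factorial k : ℚ) ≠ 0 :=
  Nat.cast_ne_zero.mpr (Nat.factorial_ne_zero k)

-- identity (1)
lemma id1 (r' : ℕ) : Fq3 (r' + 1) 0 0 = Fq3 r' 0 0 := by
  unfold Fq3
  rw [show r' + 1 + 0 + 0 = r' + 1 from by omega, show r' + 0 + 0 = r' from by omega,
    show r' + 1 + 2 = (r' + 2) + 1 from rfl, Nat.factorial_succ (r' + 2),
    show r' + 2 = (r' + 1) + 1 from rfl, Nat.factorial_succ (r' + 1),
    Nat.factorial_succ r']
  push_cast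
  have h1 := fac_ne r'
  have h2 : ((r' : ℚ) + 1) ≠ 0 := by positivity
  have h3 : ((r' : ℚ) + 2) ≠ 0 := by positivity
  have h4 : ((r' : ℚ) + 3) ≠ 0 := by positivity
  field_simp
  ring

-- identity (2)
lemma id2 (r' s' : ℕ) : Fq3 (r' + 1) (s' + 1) 0 = Fq3 r' (s' + 1) 0 + Fq3 (r' + 1) s' 0 := by
  unfold Fq3
  rw [show r' + 1 + (s' + 1) + 0 = (r' + s' + 1) + 1 from by omega,
    Nat.factorial_succ (r' + s' + 1),
    show r' + (s' + 1) + 0 = r' + s' + 1 from by omega,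
    show r' + 1 + s' + 0 = r' + s' + 1 from by omega,
    show r' + 1 + 2 = (r' + 2) + 1 from rfl, Nat.factorial_succ (r' + 2),
    show s' + 1 + 1 = (s' + 1) + 1 from rfl, Nat.factorial_succ (s' + 1)]
  push_cast
  have h1 := fac_ne (r' + s' + 1)
  have h2 := fac_ne (r' + 2)
  have h3 := fac_ne (s' + 1)
  have h4 := fac_ne 0
  have h5 : ((r' : ℚ) + 3) ≠ 0 := by positivity
  have h6 : ((s' : ℚ) + 2) ≠ 0 := by positivity
  field_simp
  ring

-- identity (3)
lemma id3 (r' s'' t' : ℕ) :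
    Fq3 (r' + 1) (s'' + 1) (t' + 1)
      = Fq3 r' (s'' + 1) (t' + 1) + Fq3 (r' + 1) s'' (t' + 1) + Fq3 (r' + 1) (s'' + 1) t' := by
  unfold Fq3
  rw [show r' + 1 + (s'' + 1) + (t' + 1) = (r' + s'' + t' + 2) + 1 from by omega,
    Nat.factorial_succ (r' + s'' + t' + 2),
    show r' + (s'' + 1) + (t' + 1) = r' + s'' + t' + 2 from by omega,
    show r' + 1 + s'' + (t' + 1) = r' + s'' + t' + 2 from by omega,
    show r' + 1 + (s'' + 1) + t' = r' + s'' + t' + 2 from by omega,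
    show r' + 1 + 2 = (r' + 2) + 1 from rfl, Nat.factorial_succ (r' + 2),
    show s'' + 1 + 1 = (s'' + 1) + 1 from rfl, Nat.factorial_succ (s'' + 1),
    Nat.factorial_succ t']
  push_cast
  have h1 := fac_ne (r' + s'' + t' + 2)
  have h2 := fac_ne (r' + 2)
  have h3 := fac_ne (s'' + 1)
  have h4 := fac_ne t'
  have h5 : ((r' : ℚ) + 3) ≠ 0 := by positivity
  have h6 : ((s'' : ℚ) + 2) ≠ 0 := by positivity
  have h7 : ((t' : ℚ) + 1) ≠ 0 := by positivity
  field_simp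
  ring

lemma three_formula : ∀ n r s t : ℕ, r + s + t = n → t ≤ s → s ≤ r →
    (fSYT [r, s, t] : ℚ) = Fq3 r s t := by
  intro n
  induction n using Nat.strong_induction_on with
  | _ n ih =>
    intro r s t hn hts hsr
    rcases Nat.eq_zero_or_pos n with rfl | hpos
    · obtain ⟨rfl, rfl, rfl⟩ : r = 0 ∧ s = 0 ∧ t = 0 := by omega
      have hsort : List.Pairwise (· ≥ ·) [0, 0, 0] := by
        rw [sorted_iff_getD]; intro i
        rcases i with _ | (_ | (_ | i)) <;> simp [getD_default]
      rw [fSYT_sum_zero hsort (by simp)]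
      unfold Fq3
      norm_num [Nat.factorial]
    · have hr : 1 ≤ r := by omega
      obtain ⟨r', rfl⟩ : ∃ r', r = r' + 1 := ⟨r - 1, by omega⟩
      rw [fSYT_three_row hts hsr hr]
      have hzA : ∀ s t : ℕ, r' = s → Fq3 r' (s + 1) t = 0 := by
        intro s t h
        unfold Fq3; push_cast
        rw [show ((r' : ℚ) - (s + 1) + 1) = 0 by rw [h]; ring]
        ring
      rcases Nat.eq_zero_or_pos t with rfl | ht
      · rcases Nat.eq_zero_or_pos s with rfl | hs
        · rw [if_pos (show (0:ℕ) < r' + 1 from by omega), if_neg (lt_irrefl 0),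
            Nat.add_sub_cancel]
          push_cast
          rw [ih (n - 1) (by omega) r' 0 0 (by omega) (by omega) (by omega), id1]
          ring
        · obtain ⟨s', rfl⟩ : ∃ s', s = s' + 1 := ⟨s - 1, by omega⟩
          rw [if_pos hs, if_neg (lt_irrefl 0), Nat.add_sub_cancel, Nat.add_sub_cancel]
          by_cases h : s' + 1 < r' + 1
          · rw [if_pos h]
            push_cast
            rw [ih (n - 1) (by omega) r' (s' + 1) 0 (by omega) (by omega) (by omega),
              ih (n - 1) (by omega) (r' + 1) s' 0 (by omega) (by omega) (by omega), id2]
            ring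
          · rw [if_neg h]
            push_cast
            rw [ih (n - 1) (by omega) (r' + 1) s' 0 (by omega) (by omega) (by omega), id2,
              hzA s' 0 (by omega)]
            ring
      · obtain ⟨t', rfl⟩ : ∃ t', t = t' + 1 := ⟨t - 1, by omega⟩
        obtain ⟨s'', rfl⟩ : ∃ s'', s = s'' + 1 := ⟨s - 1, by omega⟩
        have hzB : s'' = t' → Fq3 (r' + 1) s'' (t' + 1) = 0 := by
          intro h
          unfold Fq3; push_cast
          rw [show ((s'' : ℚ) - (t' + 1) + 1) = 0 by rw [h]; ring]
          ring
        rw [if_pos ht, Nat.add_sub_cancel, Nat.add_sub_cancel, Nat.add_sub_cancel]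
        by_cases h1 : s'' + 1 < r' + 1 <;> by_cases h2 : t' + 1 < s'' + 1
        · rw [if_pos h1, if_pos h2]
          push_cast
          rw [ih (n - 1) (by omega) r' (s'' + 1) (t' + 1) (by omega) (by omega) (by omega),
            ih (n - 1) (by omega) (r' + 1) s'' (t' + 1) (by omega) (by omega) (by omega),
            ih (n - 1) (by omega) (r' + 1) (s'' + 1) t' (by omega) (by omega) (by omega), id3]
        · rw [if_pos h1, if_neg h2]
          push_cast
          rw [ih (n - 1) (by omega) r' (s'' + 1) (t' + 1) (by omega) (by omega) (by omega),
            ih (n - 1) (by omega) (r' + 1) (s'' + 1) t' (by omega) (by omega) (by omega), id3,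
            hzB (by omega)]
        · rw [if_neg h1, if_pos h2]
          push_cast
          rw [ih (n - 1) (by omega) (r' + 1) s'' (t' + 1) (by omega) (by omega) (by omega),
            ih (n - 1) (by omega) (r' + 1) (s'' + 1) t' (by omega) (by omega) (by omega), id3,
            hzA s'' (t' + 1) (by omega)]
        · rw [if_neg h1, if_neg h2]
          push_cast
          rw [ih (n - 1) (by omega) (r' + 1) (s'' + 1) t' (by omega) (by omega) (by omega), id3,
            hzA s'' (t' + 1) (by omega), hzB (by omega)]
          ring

end SYTAux

namespace SYTAux

-- bridge: two-row case
lemma id6 (a b' : ℕ) : Fq3 a (b' + 1) 0 = Fqh a (b' + 1) 0 := by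
  unfold Fq3 Fqh
  rw [show a + (b' + 1) + 0 = a + (b' + 1) from by omega,
    show a + 2 = (a + 1) + 1 from rfl, Nat.factorial_succ (a + 1), Nat.factorial_succ a,
    show b' + 1 + 1 = (b' + 1) + 1 from rfl, Nat.factorial_succ (b' + 1),
    Nat.factorial_succ b', show b' + 1 - 1 = b' from rfl]
  push_cast
  have h1 := fac_ne a
  have h2 := fac_ne b'
  have h3 := fac_ne 0
  have h4 : ((a : ℚ) + 1) ≠ 0 := by positivity
  have h5 : ((a : ℚ) + 2) ≠ 0 := by positivity
  have h6 : ((b' : ℚ) + 1) ≠ 0 := by positivity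
  have h7 : ((b' : ℚ) + 2) ≠ 0 := by positivity
  have h8 : ((a : ℚ) + 0 + 1) ≠ 0 := by positivity
  have h9 : ((b' : ℚ) + 1 + 0) ≠ 0 := by positivity
  field_simp
  ring

-- bridge: three-row with third row 1
lemma id7 (a b' : ℕ) : Fq3 a (b' + 1) 1 = Fqh a (b' + 1) 1 := by
  unfold Fq3 Fqh
  rw [show a + (b' + 1) + 1 = a + (b' + 1) + 1 from rfl,
    show a + 2 = (a + 1) + 1 from rfl, Nat.factorial_succ (a + 1), Nat.factorial_succ a,
    show b' + 1 + 1 = (b' + 1) + 1 from rfl, Nat.factorial_succ (b' + 1),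
    Nat.factorial_succ b', show b' + 1 - 1 = b' from rfl]
  push_cast
  have h1 := fac_ne a
  have h2 := fac_ne b'
  have h3 := fac_ne 1
  have h4 : ((a : ℚ) + 1) ≠ 0 := by positivity
  have h5 : ((a : ℚ) + 2) ≠ 0 := by positivity
  have h6 : ((b' : ℚ) + 1) ≠ 0 := by positivity
  have h7 : ((b' : ℚ) + 2) ≠ 0 := by positivity
  have h8 : ((a : ℚ) + 1 + 1) ≠ 0 := by positivity
  have h9 : ((b' : ℚ) + 1 + 1) ≠ 0 := by positivity
  field_simp
  ring

-- hook recursion, b = 1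
lemma id4 (a' u : ℕ) :
    Fqh (a' + 1) 1 (u + 2) = Fqh a' 1 (u + 2) + Fqh (a' + 1) 1 (u + 1) := by
  unfold Fqh
  rw [show a' + 1 + 1 + (u + 2) = (a' + u + 3) + 1 from by omega,
    Nat.factorial_succ (a' + u + 3),
    show a' + 1 + (u + 2) = a' + u + 3 from by omega,
    show a' + 1 + 1 + (u + 1) = a' + u + 3 from by omega,
    Nat.factorial_succ a', show (1 : ℕ) - 1 = 0 from rfl,
    show u + 2 = (u + 1) + 1 from rfl, Nat.factorial_succ (u + 1)]
  push_cast
  have h1 := fac_ne (a' + u + 3)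
  have h2 := fac_ne a'
  have h3 := fac_ne (u + 1)
  have h4 := fac_ne 0
  have h5 : ((a' : ℚ) + 1) ≠ 0 := by positivity
  have h6 : ((u : ℚ) + 2) ≠ 0 := by positivity
  have h7 : ((a' : ℚ) + 1 + (u + 1 + 1) + 1) ≠ 0 := by positivity
  have h8 : ((1 : ℚ) + (u + 1 + 1)) ≠ 0 := by positivity
  have h9 : ((a' : ℚ) + (u + 1 + 1) + 1) ≠ 0 := by positivity
  have h10 : ((a' : ℚ) + 1 + (u + 1) + 1) ≠ 0 := by positivity
  have h11 : ((1 : ℚ) + (u + 1)) ≠ 0 := by positivity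
  field_simp
  ring

-- hook recursion, b ≥ 2
lemma id5 (a' b'' u : ℕ) :
    Fqh (a' + 1) (b'' + 2) (u + 2)
      = Fqh a' (b'' + 2) (u + 2) + Fqh (a' + 1) (b'' + 1) (u + 2)
        + Fqh (a' + 1) (b'' + 2) (u + 1) := by
  unfold Fqh
  rw [show a' + 1 + (b'' + 2) + (u + 2) = (a' + b'' + u + 4) + 1 from by omega,
    Nat.factorial_succ (a' + b'' + u + 4),
    show a' + (b'' + 2) + (u + 2) = a' + b'' + u + 4 from by omega,
    show a' + 1 + (b'' + 1) + (u + 2) = a' + b'' + u + 4 from by omega,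
    show a' + 1 + (b'' + 2) + (u + 1) = a' + b'' + u + 4 from by omega,
    Nat.factorial_succ a',
    show b'' + 2 - 1 = b'' + 1 from rfl, show b'' + 1 - 1 = b'' from rfl,
    Nat.factorial_succ b'',
    show u + 2 = (u + 1) + 1 from rfl, Nat.factorial_succ (u + 1)]
  push_cast
  have h1 := fac_ne (a' + b'' + u + 4)
  have h2 := fac_ne a'
  have h3 := fac_ne b''
  have h4 := fac_ne (u + 1)
  have h5 : ((a' : ℚ) + 1) ≠ 0 := by positivity
  have h6 : ((b'' : ℚ) + 1) ≠ 0 := by positivity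
  have h7 : ((u : ℚ) + 2) ≠ 0 := by positivity
  have h8 : ((a' : ℚ) + 1 + (u + 1 + 1) + 1) ≠ 0 := by positivity
  have h9 : ((b'' : ℚ) + 2 + (u + 1 + 1)) ≠ 0 := by positivity
  have h10 : ((a' : ℚ) + (u + 1 + 1) + 1) ≠ 0 := by positivity
  have h11 : ((b'' : ℚ) + 1 + (u + 1 + 1)) ≠ 0 := by positivity
  have h12 : ((a' : ℚ) + 1 + (u + 1) + 1) ≠ 0 := by positivity
  have h13 : ((b'' : ℚ) + 2 + (u + 1)) ≠ 0 := by positivity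
  field_simp
  ring

lemma hook_formula : ∀ n a b t : ℕ, a + b + t = n → 1 ≤ b → b ≤ a →
    (fSYT (a :: b :: List.replicate t 1) : ℚ) = Fqh a b t := by
  intro n
  induction n using Nat.strong_induction_on with
  | _ n ih =>
    intro a b t hn hb hba
    rcases Nat.lt_or_ge t 2 with ht | ht
    · obtain ⟨b', rfl⟩ : ∃ b', b = b' + 1 := ⟨b - 1, by omega⟩
      interval_cases t
      · rw [List.replicate_zero]
        rw [show fSYT (a :: (b' + 1) :: ([] : List ℕ)) = fSYT [a, b' + 1, 0] from by
          rw [show ([a, b' + 1, 0] : List ℕ) = [a, b' + 1] ++ [0] from rfl, fSYT_append_zero]]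
        rw [three_formula (a + (b' + 1) + 0) a (b' + 1) 0 rfl (by omega) hba, id6]
      · rw [List.replicate_one]
        rw [three_formula (a + (b' + 1) + 1) a (b' + 1) 1 rfl (by omega) hba, id7]
    · obtain ⟨u, rfl⟩ : ∃ u, t = u + 2 := ⟨t - 2, by omega⟩
      obtain ⟨a', rfl⟩ : ∃ a', a = a' + 1 := ⟨a - 1, by omega⟩
      have hzh : ∀ b t : ℕ, b = a' + 1 → Fqh a' b t = 0 := by
        intro b t h
        unfold Fqh
        rw [show ((a' : ℚ) - b + 1) = 0 by rw [h]; push_cast; ring]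
        ring
      rw [fSYT_hook_rec hb hba, Nat.add_sub_cancel]
      rcases Nat.lt_or_ge b 2 with hb2 | hb2
      · obtain rfl : b = 1 := by omega
        rw [if_neg (lt_irrefl 1)]
        by_cases h : 1 < a' + 1
        · rw [if_pos h]
          push_cast
          rw [ih (n - 1) (by omega) a' 1 (u + 2) (by omega) (by omega) (by omega),
            ih (n - 1) (by omega) (a' + 1) 1 (u + 1) (by omega) (by omega) (by omega), id4]
          ring
        · rw [if_neg h]
          push_cast
          rw [ih (n - 1) (by omega) (a' + 1) 1 (u + 1) (by omega) (by omega) (by omega), id4,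
            hzh 1 (u + 2) (by omega)]
      · obtain ⟨b'', rfl⟩ : ∃ b'', b = b'' + 2 := ⟨b - 2, by omega⟩
        rw [if_pos (show 1 < b'' + 2 from by omega), show b'' + 2 - 1 = b'' + 1 from rfl]
        by_cases h : b'' + 2 < a' + 1
        · rw [if_pos h]
          push_cast
          rw [ih (n - 1) (by omega) a' (b'' + 2) (u + 2) (by omega) (by omega) (by omega),
            ih (n - 1) (by omega) (a' + 1) (b'' + 1) (u + 2) (by omega) (by omega) (by omega),
            ih (n - 1) (by omega) (a' + 1) (b'' + 2) (u + 1) (by omega) (by omega) (by omega),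
            id5]
        · rw [if_neg h]
          push_cast
          rw [ih (n - 1) (by omega) (a' + 1) (b'' + 1) (u + 2) (by omega) (by omega) (by omega),
            ih (n - 1) (by omega) (a' + 1) (b'' + 2) (u + 1) (by omega) (by omega) (by omega),
            id5, hzh (b'' + 2) (u + 2) (by omega)]

end SYTAux

namespace SYTAux

lemma idSym (r w : ℕ) : Fq3 r r (w + 2) = Fq3 w (r + 1) (r + 1) := by
  unfold Fq3
  rw [show r + r + (w + 2) = w + (r + 1) + (r + 1) from by omega]
  push_cast
  ring

set_option maxHeartbeats 8000000 in
lemma idMain (k2 m4 : ℕ) :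
    Fqh (k2 + 2) (k2 + 2) (m4 + 4) + Fqh (k2 + 3) (k2 + 3) (m4 + 2)
      + Fqh (k2 + 4) (k2 + 4) m4
    = Fqh (k2 + 4) (k2 + 2) (m4 + 2) + Fq3 (k2 + 2) (k2 + 2) (m4 + 4) := by
  have e2 : ((Nat.factorial (k2 + 2) : ℚ)) = (k2 + 2) * Nat.factorial (k2 + 1) := by
    rw [show k2 + 2 = (k2 + 1) + 1 from rfl, Nat.factorial_succ]
    push_cast; ring
  have e3 : ((Nat.factorial (k2 + 3) : ℚ))
      = (k2 + 3) * ((k2 + 2) * Nat.factorial (k2 + 1)) := by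
    rw [show k2 + 3 = (k2 + 2) + 1 from rfl, Nat.factorial_succ]
    push_cast [e2]; ring
  have e4 : ((Nat.factorial (k2 + 4) : ℚ))
      = (k2 + 4) * ((k2 + 3) * ((k2 + 2) * Nat.factorial (k2 + 1))) := by
    rw [show k2 + 4 = (k2 + 3) + 1 from rfl, Nat.factorial_succ]
    push_cast [e3]; ring
  have f1 : ((Nat.factorial (m4 + 1) : ℚ)) = (m4 + 1) * Nat.factorial m4 := by
    rw [Nat.factorial_succ]; push_cast; ring
  have f2 : ((Nat.factorial (m4 + 2) : ℚ))
      = (m4 + 2) * ((m4 + 1) * Nat.factorial m4) := by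
    rw [show m4 + 2 = (m4 + 1) + 1 from rfl, Nat.factorial_succ]
    push_cast [f1]; ring
  have f3 : ((Nat.factorial (m4 + 3) : ℚ))
      = (m4 + 3) * ((m4 + 2) * ((m4 + 1) * Nat.factorial m4)) := by
    rw [show m4 + 3 = (m4 + 2) + 1 from rfl, Nat.factorial_succ]
    push_cast [f2]; ring
  have f4 : ((Nat.factorial (m4 + 4) : ℚ))
      = (m4 + 4) * ((m4 + 3) * ((m4 + 2) * ((m4 + 1) * Nat.factorial m4))) := by
    rw [show m4 + 4 = (m4 + 3) + 1 from rfl, Nat.factorial_succ]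
    push_cast [f3]; ring
  unfold Fqh Fq3
  rw [show k2 + 2 + (k2 + 2) + (m4 + 4) = 2 * k2 + m4 + 8 from by omega,
    show k2 + 3 + (k2 + 3) + (m4 + 2) = 2 * k2 + m4 + 8 from by omega,
    show k2 + 4 + (k2 + 4) + m4 = 2 * k2 + m4 + 8 from by omega,
    show k2 + 4 + (k2 + 2) + (m4 + 2) = 2 * k2 + m4 + 8 from by omega,
    show k2 + 2 - 1 = k2 + 1 from rfl, show k2 + 3 - 1 = k2 + 2 from rfl,
    show k2 + 4 - 1 = k2 + 3 from rfl,
    show k2 + 2 + 2 = k2 + 4 from rfl, show k2 + 2 + 1 = k2 + 3 from rfl]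
  push_cast
  rw [e2, e3, e4, f2, f4]
  have g0 := fac_ne (k2 + 1)
  have g1 := fac_ne m4
  have g2 := fac_ne (2 * k2 + m4 + 8)
  have p1 : ((k2 : ℚ) + 2 + ((m4 : ℚ) + 4) + 1) ≠ 0 := by positivity
  have p2 : ((k2 : ℚ) + 2 + ((m4 : ℚ) + 4)) ≠ 0 := by positivity
  have p3 : ((k2 : ℚ) + 3 + ((m4 : ℚ) + 2) + 1) ≠ 0 := by positivity
  have p4 : ((k2 : ℚ) + 3 + ((m4 : ℚ) + 2)) ≠ 0 := by positivity
  have p5 : ((k2 : ℚ) + 4 + (m4 : ℚ) + 1) ≠ 0 := by positivity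
  have p6 : ((k2 : ℚ) + 4 + (m4 : ℚ)) ≠ 0 := by positivity
  have p7 : ((k2 : ℚ) + 4 + ((m4 : ℚ) + 2) + 1) ≠ 0 := by positivity
  have p8 : ((k2 : ℚ) + 2 + ((m4 : ℚ) + 2)) ≠ 0 := by positivity
  have q1 : ((k2 : ℚ) + 2) ≠ 0 := by positivity
  have q2 : ((k2 : ℚ) + 3) ≠ 0 := by positivity
  have q3 : ((k2 : ℚ) + 4) ≠ 0 := by positivity
  have q4 : ((m4 : ℚ) + 1) ≠ 0 := by positivity
  have q5 : ((m4 : ℚ) + 2) ≠ 0 := by positivity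
  have q6 : ((m4 : ℚ) + 3) ≠ 0 := by positivity
  have q7 : ((m4 : ℚ) + 4) ≠ 0 := by positivity
  field_simp
  ring

end SYTAux


/-- **Lemma.** For `k ≥ 2`, `m ≥ 4`, let
`L(k,m) = f^{(k,k,1^m)} + f^{(k+1,k+1,1^{m-2})} + f^{(k+2,k+2,1^{m-4})}`. Then
`L(k,m) = f^{(k+2,k,1^{m-2})} + f^{(k,k,m)}` if `m ≤ k`;
`L(k,m) = f^{(k+2,k,1^{m-2})}` if `m = k+1` or `m = k+2`;
`L(k,m) = f^{(k+2,k,1^{m-2})} + f^{(m-2,k+1,k+1)}` if `m ≥ k+3`. -/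
theorem L_three_term_identity (k m : ℕ) (hk : 2 ≤ k) (hm : 4 ≤ m) :
    ((m ≤ k →
      fSYT (k :: k :: List.replicate m 1)
        + fSYT ((k + 1) :: (k + 1) :: List.replicate (m - 2) 1)
        + fSYT ((k + 2) :: (k + 2) :: List.replicate (m - 4) 1)
      = fSYT ((k + 2) :: k :: List.replicate (m - 2) 1) + fSYT [k, k, m]) ∧
    ((m = k + 1 ∨ m = k + 2) →
      fSYT (k :: k :: List.replicate m 1)
        + fSYT ((k + 1) :: (k + 1) :: List.replicate (m - 2) 1)
        + fSYT ((k + 2) :: (k + 2) :: List.replicate (m - 4) 1)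
      = fSYT ((k + 2) :: k :: List.replicate (m - 2) 1)) ∧
    (k + 3 ≤ m →
      fSYT (k :: k :: List.replicate m 1)
        + fSYT ((k + 1) :: (k + 1) :: List.replicate (m - 2) 1)
        + fSYT ((k + 2) :: (k + 2) :: List.replicate (m - 4) 1)
      = fSYT ((k + 2) :: k :: List.replicate (m - 2) 1)
        + fSYT [m - 2, k + 1, k + 1])) := by
  obtain ⟨k2, rfl⟩ : ∃ k2, k = k2 + 2 := ⟨k - 2, by omega⟩
  obtain ⟨m4, rfl⟩ : ∃ m4, m = m4 + 4 := ⟨m - 4, by omega⟩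
  rw [show m4 + 4 - 2 = m4 + 2 from rfl, show m4 + 4 - 4 = m4 from rfl,
    show k2 + 2 + 1 = k2 + 3 from rfl, show k2 + 2 + 2 = k2 + 4 from rfl]
  have h1 : (fSYT ((k2 + 2) :: (k2 + 2) :: List.replicate (m4 + 4) 1) : ℚ)
      = SYTAux.Fqh (k2 + 2) (k2 + 2) (m4 + 4) :=
    SYTAux.hook_formula _ _ _ _ rfl (by omega) (by omega)
  have h2 : (fSYT ((k2 + 3) :: (k2 + 3) :: List.replicate (m4 + 2) 1) : ℚ)
      = SYTAux.Fqh (k2 + 3) (k2 + 3) (m4 + 2) :=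
    SYTAux.hook_formula _ _ _ _ rfl (by omega) (by omega)
  have h3 : (fSYT ((k2 + 4) :: (k2 + 4) :: List.replicate m4 1) : ℚ)
      = SYTAux.Fqh (k2 + 4) (k2 + 4) m4 :=
    SYTAux.hook_formula _ _ _ _ rfl (by omega) (by omega)
  have h4 : (fSYT ((k2 + 4) :: (k2 + 2) :: List.replicate (m4 + 2) 1) : ℚ)
      = SYTAux.Fqh (k2 + 4) (k2 + 2) (m4 + 2) :=
    SYTAux.hook_formula _ _ _ _ rfl (by omega) (by omega)
  refine ⟨?_, ?_, ?_⟩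
  · intro hmk
    have h5 : (fSYT [k2 + 2, k2 + 2, m4 + 4] : ℚ)
        = SYTAux.Fq3 (k2 + 2) (k2 + 2) (m4 + 4) :=
      SYTAux.three_formula _ _ _ _ rfl (by omega) (by omega)
    apply @Nat.cast_injective ℚ _ _
    push_cast
    rw [h1, h2, h3, h4, h5]
    exact SYTAux.idMain k2 m4
  · intro hm2
    have hz : SYTAux.Fq3 (k2 + 2) (k2 + 2) (m4 + 4) = 0 := by
      have hk2 : k2 = m4 + 1 ∨ k2 = m4 := by omega
      unfold SYTAux.Fq3
      rcases hk2 with rfl | rfl <;> (push_cast; ring)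
    apply @Nat.cast_injective ℚ _ _
    push_cast
    rw [h1, h2, h3, h4, SYTAux.idMain k2 m4, hz]
    ring
  · intro hm3
    have h5 : (fSYT [m4 + 2, k2 + 3, k2 + 3] : ℚ)
        = SYTAux.Fq3 (m4 + 2) (k2 + 3) (k2 + 3) :=
      SYTAux.three_formula _ _ _ _ rfl (le_refl _) (by omega)
    have hsym : SYTAux.Fq3 (k2 + 2) (k2 + 2) (m4 + 4)
        = SYTAux.Fq3 (m4 + 2) (k2 + 3) (k2 + 3) := by
      have h := SYTAux.idSym (k2 + 2) (m4 + 2)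
      rw [show m4 + 2 + 2 = m4 + 4 from rfl, show k2 + 2 + 1 = k2 + 3 from rfl] at h
      exact h
    apply @Nat.cast_injective ℚ _ _
    push_cast
    rw [h1, h2, h3, h4, h5, SYTAux.idMain k2 m4, hsym]
end

section
/- For integers k ≥ 2 and m ≥ 4, the difference Δ₃(k,m) = f^{(k,k,1^m)} + f^{(k+1,k+1,1^{m−2})} + f^{(k+2,k+2,1^{m−4})} − f^{(k+2,k,1^{m−2})} satisfies Δ₃(k,m) = ((2k+m)! / ((k+1)! · (k+2)! · m!)) · (k−m+1) · (k−m+2), where both sides are viewed as rational numbers (the factors k−m+1 and k−m+2 being integers that may be negative). -/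
lemma getD_eq_zero_of_le {l : List ℕ} {i : ℕ} (h : l.length ≤ i) : l.getD i 0 = 0 := by
  rw [List.getD_eq_getElem?_getD, List.getElem?_eq_none h]; rfl

lemma getD_le_sum (l : List ℕ) (i : ℕ) : l.getD i 0 ≤ l.sum := by
  rcases lt_or_ge i l.length with h | h
  · rw [List.getD_eq_getElem?_getD, List.getElem?_eq_getElem h]
    exact List.single_le_sum (fun _ _ => Nat.zero_le _) _ (List.getElem_mem h)
  · rw [getD_eq_zero_of_le h]; exact Nat.zero_le _

lemma inShape_lt_length {l : List ℕ} {c : ℕ × ℕ} (h : InShape l c) : c.1 < l.length := by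
  by_contra hc
  rw [InShape, getD_eq_zero_of_le (le_of_not_gt hc)] at h
  exact Nat.not_lt_zero _ h

lemma inShape_lt_sum {l : List ℕ} {c : ℕ × ℕ} (h : InShape l c) : c.2 < l.sum :=
  lt_of_lt_of_le h (getD_le_sum l c.1)

lemma shape_finite (l : List ℕ) : {c : ℕ × ℕ | InShape l c}.Finite :=
  Set.Finite.subset ((Set.finite_Iio l.length).prod (Set.finite_Iio l.sum))
    (fun c hc => ⟨inShape_lt_length hc, inShape_lt_sum hc⟩)

instance sytFinite (l : List ℕ) : Finite {T : ℕ × ℕ → ℕ // IsSYT l T} := by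
  haveI : Finite {c : ℕ × ℕ // InShape l c} := (shape_finite l).to_subtype
  haveI : Finite (Set.Iio l.sum) := (Set.finite_Iio l.sum).to_subtype
  apply Finite.of_injective
    (f := fun T : {T : ℕ × ℕ → ℕ // IsSYT l T} =>
      fun c : {c : ℕ × ℕ // InShape l c} => (⟨T.1 c.1, T.2.1.1 c.2⟩ : Set.Iio l.sum))
  intro T S h
  apply Subtype.ext
  funext c
  by_cases hc : InShape l c
  · have := congrFun h ⟨c, hc⟩
    exact congrArg Subtype.val this
  · rw [T.2.2.2.2 c hc, S.2.2.2.2 c hc]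

-- sum = 0 case
lemma isSYT_iff_of_sum_zero {l : List ℕ} (h : l.sum = 0) (T : ℕ × ℕ → ℕ) :
    IsSYT l T ↔ T = fun _ => 0 := by
  have hsh : ∀ c, ¬ InShape l c := by
    intro c hc
    have := inShape_lt_sum hc
    omega
  constructor
  · intro hT
    funext c
    exact hT.2.2.2 c (hsh c)
  · rintro rfl
    have he : {c : ℕ × ℕ | InShape l c} = ∅ := Set.eq_empty_iff_forall_notMem.2 hsh
    have he2 : Set.Iio l.sum = (∅ : Set ℕ) := by
      rw [h]; ext x; simp
    refine ⟨?_, ?_, ?_, fun c _ => rfl⟩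
    · rw [he, he2]; exact Set.bijOn_empty _
    · intro i j hij; exact absurd hij (hsh _)
    · intro i j hij; exact absurd hij (hsh _)

lemma fSYT_of_sum_zero {l : List ℕ} (hl : List.Pairwise (· ≥ ·) l) (h : l.sum = 0) :
    fSYT l = 1 := by
  rw [fSYT, if_pos hl]
  haveI : Unique {T : ℕ × ℕ → ℕ // IsSYT l T} :=
    { default := ⟨fun _ => 0, (isSYT_iff_of_sum_zero h _).2 rfl⟩
      uniq := fun T => Subtype.ext ((isSYT_iff_of_sum_zero h _).1 T.2) }
  exact Nat.card_unique

-- decRow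
def decRow (l : List ℕ) (i : ℕ) : List ℕ := l.set i (l.getD i 0 - 1)

lemma getD_decRow (l : List ℕ) (i j : ℕ) :
    (decRow l i).getD j 0 = if j = i then l.getD i 0 - 1 else l.getD j 0 := by
  rcases eq_or_ne j i with rfl | hne
  · rw [if_pos rfl, decRow, List.getD_eq_getElem?_getD]
    rcases lt_or_ge j l.length with h | h
    · rw [List.getElem?_set_self (by simpa using h)]; rfl
    · rw [List.set_eq_of_length_le h, List.getElem?_eq_none h]
      rw [getD_eq_zero_of_le h]; rfl
  · rw [if_neg hne, decRow, List.getD_eq_getElem?_getD, List.getElem?_set_ne (Ne.symm hne),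
      List.getD_eq_getElem?_getD]

lemma sum_set_aux : ∀ (l : List ℕ) (i a : ℕ), i < l.length →
    (l.set i a).sum + l.getD i 0 = l.sum + a := by
  intro l
  induction l with
  | nil => intro i a h; simp at h
  | cons x xs ih =>
    intro i a h
    cases i with
    | zero => simp [List.getD]; omega
    | succ n =>
      have := ih n a (by simpa using h)
      simp only [List.set, List.sum_cons, List.getD_cons_succ]
      omega

lemma sum_decRow {l : List ℕ} {i : ℕ} (h : 0 < l.getD i 0) :
    (decRow l i).sum + 1 = l.sum := by
  have hi : i < l.length := by
    by_contra hc
    rw [getD_eq_zero_of_le (le_of_not_gt hc)] at h; omega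
  have := sum_set_aux l i (l.getD i 0 - 1) hi
  rw [decRow]
  omega

lemma sorted_iff_getD {l : List ℕ} :
    List.Pairwise (· ≥ ·) l ↔ ∀ i j, i < j → l.getD j 0 ≤ l.getD i 0 := by
  rw [List.pairwise_iff_getElem]
  constructor
  · intro h i j hij
    rcases lt_or_ge j l.length with hj | hj
    · have hi : i < l.length := lt_trans hij hj
      have := h i j hi hj hij
      rw [List.getD_eq_getElem?_getD, List.getD_eq_getElem?_getD,
        List.getElem?_eq_getElem hi, List.getElem?_eq_getElem hj]
      exact this
    · rw [List.getD_eq_getElem?_getD (i := j), List.getElem?_eq_none hj]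
      exact Nat.zero_le _
  · intro h i j hi hj hij
    have := h i j hij
    rw [List.getD_eq_getElem?_getD, List.getD_eq_getElem?_getD,
      List.getElem?_eq_getElem hi, List.getElem?_eq_getElem hj] at this
    exact this

lemma sorted_decRow {l : List ℕ} (hl : List.Pairwise (· ≥ ·) l) {i : ℕ}
    (hc : l.getD (i + 1) 0 < l.getD i 0) : List.Pairwise (· ≥ ·) (decRow l i) := by
  rw [sorted_iff_getD] at hl ⊢
  intro a b hab
  rw [getD_decRow, getD_decRow]
  rcases eq_or_ne a i with ha | ha
  · subst ha
    rcases eq_or_ne b a with hb | hb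
    · omega
    · rw [if_pos rfl, if_neg hb]
      have h2 : l.getD b 0 ≤ l.getD (a + 1) 0 := by
        rcases eq_or_lt_of_le (Nat.succ_le_of_lt hab) with e | e
        · rw [← e]
        · exact hl (a + 1) b e
      omega
  · rcases eq_or_ne b i with hb | hb
    · subst hb
      rw [if_pos rfl, if_neg ha]
      have := hl a b hab
      omega
    · rw [if_neg ha, if_neg hb]
      exact hl a b hab
lemma inShape_decRow {l : List ℕ} {i : ℕ} (hc : l.getD (i + 1) 0 < l.getD i 0) (c : ℕ × ℕ) :
    InShape (decRow l i) c ↔ InShape l c ∧ c ≠ (i, l.getD i 0 - 1) := by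
  obtain ⟨x, y⟩ := c
  simp only [InShape, getD_decRow, ne_eq, Prod.mk.injEq]
  rcases eq_or_ne x i with rfl | h1
  · rw [if_pos rfl]; omega
  · rw [if_neg h1]
    constructor
    · intro h; exact ⟨h, fun hh => absurd hh.1 h1⟩
    · intro h; exact h.1

lemma syt_max_cell {l : List ℕ} {T : ℕ × ℕ → ℕ} (hT : IsSYT l T) {x y : ℕ}
    (hcs : y < l.getD x 0) (hval : T (x, y) + 1 = l.sum) :
    y + 1 = l.getD x 0 ∧ l.getD (x + 1) 0 < l.getD x 0 := by
  constructor
  · by_contra h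
    have h2 : InShape l (x, y + 1) := by show y + 1 < l.getD x 0; omega
    have h3 := hT.2.1 x y h2
    have h4 : T (x, y + 1) < l.sum := hT.1.1 h2
    omega
  · by_contra h
    have h2 : InShape l (x + 1, y) := by show y < l.getD (x + 1) 0; omega
    have h3 := hT.2.2.1 x y h2
    have h4 : T (x + 1, y) < l.sum := hT.1.1 h2
    omega

lemma isSYT_remove {l : List ℕ} {i : ℕ} {T : ℕ × ℕ → ℕ} (hT : IsSYT l T)
    (hc : l.getD (i + 1) 0 < l.getD i 0)
    (hval : T (i, l.getD i 0 - 1) + 1 = l.sum) :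
    IsSYT (decRow l i) (Function.update T (i, l.getD i 0 - 1) 0) := by
  set d := l.getD i 0 with hd
  set cs : ℕ × ℕ := (i, d - 1) with hcs
  have hd0 : 0 < d := by omega
  have hcsIn : InShape l cs := by simp only [InShape, hcs, ← hd]; omega
  have hsum : (decRow l i).sum + 1 = l.sum := sum_decRow (by omega)
  have hshape := inShape_decRow hc
  refine ⟨⟨?_, ?_, ?_⟩, ?_, ?_, ?_⟩
  · -- MapsTo
    intro c hcm
    rw [Set.mem_setOf_eq, hshape] at hcm
    obtain ⟨hc1, hc2⟩ := hcm
    rw [Function.update_of_ne hc2]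
    have h1 : T c ∈ Set.Iio l.sum := hT.1.1 hc1
    simp only [Set.mem_Iio] at h1 ⊢
    have h2 : T c ≠ T cs := fun he => hc2 (hT.1.2.1 hc1 hcsIn he)
    omega
  · -- InjOn
    intro c1 hc1 c2 hc2 he
    rw [Set.mem_setOf_eq, hshape] at hc1 hc2
    rw [Function.update_of_ne hc1.2, Function.update_of_ne hc2.2] at he
    exact hT.1.2.1 hc1.1 hc2.1 he
  · -- SurjOn
    intro v hv
    simp only [Set.mem_Iio] at hv
    have hv' : v ∈ Set.Iio l.sum := by simp only [Set.mem_Iio]; omega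
    obtain ⟨c, hcm, hce⟩ := hT.1.2.2 hv'
    rw [Set.mem_setOf_eq] at hcm
    have hne : c ≠ cs := by
      intro he; rw [he] at hce; omega
    refine ⟨c, ?_, ?_⟩
    · rw [Set.mem_setOf_eq, hshape]; exact ⟨hcm, hne⟩
    · rw [Function.update_of_ne hne]; exact hce
  · -- rows
    intro a b hab
    rw [hshape] at hab
    have hne1 : (a, b + 1) ≠ cs := hab.2
    have hne2 : (a, b) ≠ cs := by
      intro he
      have h1a : a = i := congrArg Prod.fst he
      have h1b : b = d - 1 := congrArg Prod.snd he
      have h2 : InShape (decRow l i) (a, b + 1) := (hshape _).2 hab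
      have h2' : b + 1 < (decRow l i).getD a 0 := h2
      rw [h1a, getD_decRow, if_pos rfl] at h2'
      omega
    rw [Function.update_of_ne hne2, Function.update_of_ne hne1]
    exact hT.2.1 a b hab.1
  · -- cols
    intro a b hab
    rw [hshape] at hab
    have hne1 : (a + 1, b) ≠ cs := hab.2
    have hne2 : (a, b) ≠ cs := by
      intro he
      have h1a : a = i := congrArg Prod.fst he
      have h1b : b = d - 1 := congrArg Prod.snd he
      have h2 : InShape l (a + 1, b) := hab.1
      have h2' : b < l.getD (a + 1) 0 := h2
      rw [h1a] at h2'
      omega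
    rw [Function.update_of_ne hne2, Function.update_of_ne hne1]
    exact hT.2.2.1 a b hab.1
  · -- zero
    intro c hcn
    rcases eq_or_ne c cs with rfl | hne
    · exact Function.update_self _ _ _
    · rw [Function.update_of_ne hne]
      apply hT.2.2.2
      intro hin
      exact hcn ((hshape c).2 ⟨hin, hne⟩)
lemma isSYT_add {l : List ℕ} (hl : List.Pairwise (· ≥ ·) l) {i : ℕ}
    (hc : l.getD (i + 1) 0 < l.getD i 0) {T' : ℕ × ℕ → ℕ}
    (hT' : IsSYT (decRow l i) T') :
    IsSYT l (Function.update T' (i, l.getD i 0 - 1) (l.sum - 1)) := by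
  have hl' := sorted_iff_getD.1 hl
  set d := l.getD i 0 with hd
  set cs : ℕ × ℕ := (i, d - 1) with hcs
  have hd0 : 0 < d := by omega
  have hcsIn : InShape l cs := by show d - 1 < l.getD i 0; omega
  have hsum : (decRow l i).sum + 1 = l.sum := sum_decRow (by omega)
  have hshape := inShape_decRow hc
  have hcs0 : T' cs = 0 := by
    apply hT'.2.2.2
    intro hin
    exact ((hshape cs).1 hin).2 rfl
  refine ⟨⟨?_, ?_, ?_⟩, ?_, ?_, ?_⟩
  · -- MapsTo
    intro c hcm
    rw [Set.mem_setOf_eq] at hcm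
    rcases eq_or_ne c cs with rfl | hne
    · rw [Function.update_self]
      show l.sum - 1 < l.sum
      omega
    · rw [Function.update_of_ne hne]
      have h1 : T' c < (decRow l i).sum := hT'.1.1 ((hshape c).2 ⟨hcm, hne⟩)
      show T' c < l.sum
      omega
  · -- InjOn
    intro c1 hc1 c2 hc2 he
    rw [Set.mem_setOf_eq] at hc1 hc2
    rcases eq_or_ne c1 cs with rfl | hne1 <;> rcases eq_or_ne c2 cs with rfl | hne2
    · rfl
    · rw [Function.update_self, Function.update_of_ne hne2] at he
      have h1 : T' c2 < (decRow l i).sum := hT'.1.1 ((hshape c2).2 ⟨hc2, hne2⟩)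
      omega
    · rw [Function.update_self, Function.update_of_ne hne1] at he
      have h1 : T' c1 < (decRow l i).sum := hT'.1.1 ((hshape c1).2 ⟨hc1, hne1⟩)
      omega
    · rw [Function.update_of_ne hne1, Function.update_of_ne hne2] at he
      exact hT'.1.2.1 ((hshape c1).2 ⟨hc1, hne1⟩) ((hshape c2).2 ⟨hc2, hne2⟩) he
  · -- SurjOn
    intro v hv
    simp only [Set.mem_Iio] at hv
    rcases eq_or_ne v (l.sum - 1) with rfl | hvn
    · exact ⟨cs, hcsIn, Function.update_self _ _ _⟩
    · have hv' : v ∈ Set.Iio (decRow l i).sum := by simp only [Set.mem_Iio]; omega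
      obtain ⟨c, hcm, hce⟩ := hT'.1.2.2 hv'
      rw [Set.mem_setOf_eq] at hcm
      have h1 := (hshape c).1 hcm
      exact ⟨c, h1.1, by rw [Function.update_of_ne h1.2]; exact hce⟩
  · -- rows
    intro a b hab
    rcases eq_or_ne ((a, b + 1) : ℕ × ℕ) cs with he | hne1
    · have h1a : a = i := congrArg Prod.fst he
      have h1b : b + 1 = d - 1 := congrArg Prod.snd he
      have hne2 : ((a, b) : ℕ × ℕ) ≠ cs := by
        intro he2
        have : b = d - 1 := congrArg Prod.snd he2
        omega
      have hin2 : InShape (decRow l i) (a, b) := by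
        show b < (decRow l i).getD a 0
        rw [h1a, getD_decRow, if_pos rfl]
        omega
      have h2 : T' (a, b) < (decRow l i).sum := hT'.1.1 hin2
      rw [he, Function.update_self, Function.update_of_ne hne2]
      omega
    · have hin1 : InShape (decRow l i) (a, b + 1) := (hshape _).2 ⟨hab, hne1⟩
      have hne2 : ((a, b) : ℕ × ℕ) ≠ cs := by
        intro he2
        have h1a : a = i := congrArg Prod.fst he2
        have h1b : b = d - 1 := congrArg Prod.snd he2
        have h2' : b + 1 < (decRow l i).getD a 0 := hin1
        rw [h1a, getD_decRow, if_pos rfl] at h2'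
        omega
      rw [Function.update_of_ne hne2, Function.update_of_ne hne1]
      exact hT'.2.1 a b hin1
  · -- cols
    intro a b hab
    rcases eq_or_ne ((a + 1, b) : ℕ × ℕ) cs with he | hne1
    · have h1a : a + 1 = i := congrArg Prod.fst he
      have h1b : b = d - 1 := congrArg Prod.snd he
      have hne2 : ((a, b) : ℕ × ℕ) ≠ cs := by
        intro he2
        have : a = i := congrArg Prod.fst he2
        omega
      have hin2 : InShape (decRow l i) (a, b) := by
        show b < (decRow l i).getD a 0
        rw [getD_decRow, if_neg (by omega)]
        have := hl' a i (by omega)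
        omega
      have h2 : T' (a, b) < (decRow l i).sum := hT'.1.1 hin2
      rw [he, Function.update_self, Function.update_of_ne hne2]
      omega
    · have hin1 : InShape (decRow l i) (a + 1, b) := (hshape _).2 ⟨hab, hne1⟩
      have hne2 : ((a, b) : ℕ × ℕ) ≠ cs := by
        intro he2
        have h1a : a = i := congrArg Prod.fst he2
        have h1b : b = d - 1 := congrArg Prod.snd he2
        have h2' : b < (decRow l i).getD (a + 1) 0 := hin1
        rw [getD_decRow, if_neg (by omega)] at h2'
        rw [h1a] at h2'
        omega
      rw [Function.update_of_ne hne2, Function.update_of_ne hne1]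
      exact hT'.2.2.1 a b hin1
  · -- zero
    intro c hcn
    have hne : c ≠ cs := fun he => hcn (he ▸ hcsIn)
    rw [Function.update_of_ne hne]
    apply hT'.2.2.2
    intro hin
    exact hcn ((hshape c).1 hin).1
open Classical in
lemma fSYT_branch {l : List ℕ} (hl : List.Pairwise (· ≥ ·) l) (hn : l.sum ≠ 0) :
    fSYT l = ∑ i ∈ Finset.range l.length,
      if l.getD (i + 1) 0 < l.getD i 0 then fSYT (decRow l i) else 0 := by
  classical
  set n := l.sum with hns
  have hex : ∀ T : {T : ℕ × ℕ → ℕ // IsSYT l T}, ∃ c : ℕ × ℕ, InShape l c ∧ T.1 c = n - 1 := by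
    intro T
    obtain ⟨c, hcm, hce⟩ := T.2.1.2.2 (show n - 1 ∈ Set.Iio n by
      simp only [Set.mem_Iio]; omega)
    exact ⟨c, hcm, hce⟩
  let cell : {T : ℕ × ℕ → ℕ // IsSYT l T} → ℕ × ℕ := fun T => Classical.choose (hex T)
  have hcell : ∀ T, InShape l (cell T) ∧ T.1 (cell T) = n - 1 :=
    fun T => Classical.choose_spec (hex T)
  let rowF : {T : ℕ × ℕ → ℕ // IsSYT l T} → Fin l.length :=
    fun T => ⟨(cell T).1, inShape_lt_length (hcell T).1⟩
  -- basic facts about `cell`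
  have hmax : ∀ T, (cell T).2 + 1 = l.getD (cell T).1 0 ∧
      l.getD ((cell T).1 + 1) 0 < l.getD (cell T).1 0 := by
    intro T
    exact syt_max_cell T.2 ((hcell T).1) (by rw [(hcell T).2]; omega)
  have hcell_unique : ∀ T (c : ℕ × ℕ), InShape l c → T.1 c = n - 1 → cell T = c := by
    intro T c hc hv
    exact T.2.1.2.1 (hcell T).1 hc (by rw [(hcell T).2, hv])
  haveI : Fintype {T : ℕ × ℕ → ℕ // IsSYT l T} := Fintype.ofFinite _
  have hcard : fSYT l = ∑ i : Fin l.length, Nat.card {T // rowF T = i} := by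
    rw [fSYT, if_pos hl, Nat.card_eq_fintype_card,
      ← Fintype.card_congr (Equiv.sigmaFiberEquiv rowF), Fintype.card_sigma]
    congr 1
    funext i
    rw [Nat.card_eq_fintype_card]
  rw [hcard, ← Fin.sum_univ_eq_sum_range
    (fun i => if l.getD (i + 1) 0 < l.getD i 0 then fSYT (decRow l i) else 0) l.length]
  congr 1
  funext i
  by_cases hcor : l.getD ((i : ℕ) + 1) 0 < l.getD (i : ℕ) 0
  · rw [if_pos hcor]
    -- fiber ≃ SYT of decRow
    have hd0 : 0 < l.getD (i : ℕ) 0 := by omega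
    set cs : ℕ × ℕ := ((i : ℕ), l.getD (i : ℕ) 0 - 1) with hcsdef
    have hcsIn : InShape l cs := by show l.getD (i : ℕ) 0 - 1 < l.getD (i : ℕ) 0; omega
    have hcellT : ∀ T, rowF T = i → cell T = cs := by
      intro T hT
      have h1 := (hmax T).1
      have h2 : (cell T).1 = (i : ℕ) := congrArg Fin.val hT
      have : cell T = ((cell T).1, (cell T).2) := rfl
      rw [this, h2, hcsdef]
      congr 1
      rw [← h2]
      omega
    have hval : ∀ T : {T : ℕ × ℕ → ℕ // IsSYT l T}, rowF T = i → T.1 cs + 1 = n := by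
      intro T hT
      rw [← hcellT T hT, (hcell T).2]
      omega
    rw [fSYT, if_pos (sorted_decRow hl hcor)]
    apply Nat.card_congr
    refine
      { toFun := fun T => ⟨Function.update T.1.1 cs 0,
          isSYT_remove T.1.2 hcor (hval T.1 T.2)⟩
        invFun := fun T' => ⟨⟨Function.update T'.1 cs (n - 1),
          isSYT_add hl hcor T'.2⟩, ?_⟩
        left_inv := ?_
        right_inv := ?_ }
    · -- rowF of reconstructed tableau is i
      apply Fin.ext
      show (cell _).1 = (i : ℕ)
      rw [hcell_unique _ cs hcsIn (by
        show Function.update T'.1 cs (n - 1) cs = n - 1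
        rw [Function.update_self])]
    · rintro ⟨⟨T, hT⟩, hTi⟩
      apply Subtype.ext
      apply Subtype.ext
      funext c
      rcases eq_or_ne c cs with rfl | hne
      · show Function.update (Function.update T cs 0) cs (n - 1) cs = T cs
        rw [Function.update_self]
        have := hval ⟨T, hT⟩ hTi
        simp only at this
        omega
      · show Function.update (Function.update T cs 0) cs (n - 1) c = T c
        rw [Function.update_of_ne hne, Function.update_of_ne hne]
    · rintro ⟨T', hT'⟩
      apply Subtype.ext
      funext c
      rcases eq_or_ne c cs with rfl | hne
      · show Function.update (Function.update T' cs (n - 1)) cs 0 cs = T' cs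
        rw [Function.update_self]
        have hcs0 : T' cs = 0 := by
          apply hT'.2.2.2
          intro hin
          exact ((inShape_decRow hcor cs).1 hin).2 rfl
        rw [hcs0]
      · show Function.update (Function.update T' cs (n - 1)) cs 0 c = T' c
        rw [Function.update_of_ne hne, Function.update_of_ne hne]
  · rw [if_neg hcor]
    have : IsEmpty {T // rowF T = i} := by
      constructor
      rintro ⟨T, hT⟩
      have h2 := (hmax T).2
      have h1 : (cell T).1 = (i : ℕ) := congrArg Fin.val hT
      rw [h1] at h2
      exact hcor h2
    exact Nat.card_of_isEmpty
lemma sum_eq_getD : ∀ (l : List ℕ) (N : ℕ), l.length ≤ N →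
    l.sum = ∑ j ∈ Finset.range N, l.getD j 0 := by
  intro l
  induction l with
  | nil =>
    intro N _
    simp [List.getD]
  | cons x xs ih =>
    intro N hN
    cases N with
    | zero => simp at hN
    | succ M =>
      rw [Finset.sum_range_succ']
      simp only [List.getD_cons_succ, List.getD_cons_zero, List.sum_cons]
      rw [ih M (by simpa using hN)]
      omega

lemma isSYT_congr {l l' : List ℕ} (h : ∀ j, l.getD j 0 = l'.getD j 0) :
    IsSYT l = IsSYT l' := by
  have hsh : InShape l = InShape l' := by
    funext c; simp only [InShape, h]
  have hsum : l.sum = l'.sum := by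
    rw [sum_eq_getD l (max l.length l'.length) (le_max_left _ _),
        sum_eq_getD l' (max l.length l'.length) (le_max_right _ _)]
    exact Finset.sum_congr rfl fun j _ => h j
  funext T
  simp only [IsSYT, hsh, hsum]

lemma fSYT_congr {l l' : List ℕ} (h : ∀ j, l.getD j 0 = l'.getD j 0) :
    fSYT l = fSYT l' := by
  have hsorted : List.Pairwise (· ≥ ·) l ↔ List.Pairwise (· ≥ ·) l' := by
    rw [sorted_iff_getD, sorted_iff_getD]
    simp only [h]
  rw [fSYT, fSYT, isSYT_congr h, if_congr hsorted rfl rfl]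

lemma getD_family (a b t j : ℕ) :
    (a :: b :: List.replicate t 1).getD j 0 =
      if j = 0 then a else if j = 1 then b else if j < t + 2 then 1 else 0 := by
  match j with
  | 0 => rfl
  | 1 => rfl
  | (j + 2) =>
    simp only [List.getD_cons_succ]
    rw [List.getD_eq_getElem?_getD, List.getElem?_replicate]
    rcases lt_or_ge j t with h | h
    · rw [if_pos h, if_neg (by omega), if_neg (by omega), if_pos (by omega)]; rfl
    · rw [if_neg (by omega), if_neg (by omega), if_neg (by omega), if_neg (by omega)]; rfl

lemma length_family (a b t : ℕ) : (a :: b :: List.replicate t 1).length = t + 2 := by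
  simp

lemma sum_family (a b t : ℕ) : (a :: b :: List.replicate t 1).sum = a + b + t := by
  simp [List.sum_replicate, smul_eq_mul]; omega

lemma sorted_family {a b t : ℕ} (hb : 1 ≤ b) (hab : b ≤ a) :
    List.Pairwise (· ≥ ·) (a :: b :: List.replicate t 1) := by
  rw [sorted_iff_getD]
  intro i j hij
  rw [getD_family, getD_family]
  split_ifs <;> omega

lemma sorted_row (a : ℕ) : List.Pairwise (· ≥ ·) [a, 0] := by
  rw [sorted_iff_getD]
  intro i j hij
  match i, j with
  | 0, 1 => simp [List.getD]
  | 0, (j+2) => simp [List.getD]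
  | 1, (j+2) => simp [List.getD]
  | (i+2), (j+3) => simp [List.getD]

lemma fSYT_row (a : ℕ) : fSYT [a, 0] = 1 := by
  induction a with
  | zero => exact fSYT_of_sum_zero (sorted_row 0) (by simp)
  | succ a ih =>
    rw [fSYT_branch (sorted_row (a + 1)) (by simp)]
    have hlen : ([a + 1, 0] : List ℕ).length = 2 := rfl
    rw [hlen, Finset.sum_range_succ, Finset.sum_range_one]
    have h0 : ([a + 1, 0] : List ℕ).getD 1 0 < ([a + 1, 0] : List ℕ).getD 0 0 := by
      simp [List.getD]
    have h1 : ¬ ([a + 1, 0] : List ℕ).getD 2 0 < ([a + 1, 0] : List ℕ).getD 1 0 := by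
      simp [List.getD]
    rw [if_pos h0, if_neg h1]
    have hdec : decRow [a + 1, 0] 0 = [a, 0] := by
      simp [decRow, List.getD]
    rw [hdec, ih]
lemma family_branch (d b' t : ℕ) :
    fSYT ((b' + 1 + d) :: (b' + 1) :: List.replicate t 1)
      = (if 1 ≤ d then fSYT ((b' + d) :: (b' + 1) :: List.replicate t 1) else 0)
      + (if 1 ≤ b' then fSYT ((b' + 1 + d) :: b' :: List.replicate t 1)
          else if t = 0 then 1 else 0)
      + (if 1 ≤ t then fSYT ((b' + 1 + d) :: (b' + 1) :: List.replicate (t - 1) 1) else 0) := by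
  set l := (b' + 1 + d) :: (b' + 1) :: List.replicate t 1 with hldef
  have hsor : List.Pairwise (· ≥ ·) l := sorted_family (by omega) (by omega)
  have hsum : l.sum ≠ 0 := by rw [hldef, sum_family]; omega
  rw [fSYT_branch hsor hsum]
  have hlen : l.length = t + 2 := length_family _ _ _
  rw [hlen, Finset.sum_range_succ', Finset.sum_range_succ']
  have hgD : ∀ j, l.getD j 0 =
      if j = 0 then b' + 1 + d else if j = 1 then b' + 1 else if j < t + 2 then 1 else 0 :=
    fun j => getD_family _ _ _ j
  -- term at i = 0
  have e0 : (if l.getD (0 + 1) 0 < l.getD 0 0 then fSYT (decRow l 0) else 0)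
      = (if 1 ≤ d then fSYT ((b' + d) :: (b' + 1) :: List.replicate t 1) else 0) := by
    by_cases hd : 1 ≤ d
    · have hc : l.getD (0 + 1) 0 < l.getD 0 0 := by rw [hgD, hgD]; split_ifs <;> first | contradiction | omega
      rw [if_pos hc, if_pos hd]
      apply fSYT_congr
      intro j
      rw [getD_decRow, hgD, hgD, getD_family]
      split_ifs <;> first | contradiction | omega
    · have hc : ¬ l.getD (0 + 1) 0 < l.getD 0 0 := by rw [hgD, hgD]; split_ifs <;> first | contradiction | omega
      rw [if_neg hc, if_neg hd]
  -- term at i = 1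
  have e1 : (if l.getD (1 + 1) 0 < l.getD 1 0 then fSYT (decRow l 1) else 0)
      = (if 1 ≤ b' then fSYT ((b' + 1 + d) :: b' :: List.replicate t 1)
          else if t = 0 then 1 else 0) := by
    by_cases hb : 1 ≤ b'
    · have hc : l.getD (1 + 1) 0 < l.getD 1 0 := by rw [hgD, hgD]; split_ifs <;> first | contradiction | omega
      rw [if_pos hc, if_pos hb]
      apply fSYT_congr
      intro j
      rw [getD_decRow, hgD, hgD, getD_family]
      split_ifs <;> first | contradiction | omega
    · rw [if_neg hb]
      by_cases ht : t = 0
      · have hc : l.getD (1 + 1) 0 < l.getD 1 0 := by rw [hgD, hgD]; split_ifs <;> first | contradiction | omega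
        rw [if_pos hc, if_pos ht]
        have hcon : fSYT (decRow l 1) = fSYT ((b' + 1 + d) :: 0 :: List.replicate 0 1) := by
          apply fSYT_congr
          intro j
          rw [getD_decRow, hgD, hgD, getD_family]
          split_ifs <;> first | contradiction | omega
        rw [hcon]
        exact fSYT_row (b' + 1 + d)
      · have hc : ¬ l.getD (1 + 1) 0 < l.getD 1 0 := by rw [hgD, hgD]; split_ifs <;> first | contradiction | omega
        rw [if_neg hc, if_neg ht]
  -- sum of terms at i + 2
  have e2 : (∑ i ∈ Finset.range t,
        (if l.getD (i + 2 + 1) 0 < l.getD (i + 2) 0 then fSYT (decRow l (i + 2)) else 0))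
      = (if 1 ≤ t then fSYT ((b' + 1 + d) :: (b' + 1) :: List.replicate (t - 1) 1) else 0) := by
    by_cases ht : 1 ≤ t
    · rw [if_pos ht]
      rw [Finset.sum_eq_single_of_mem (t - 1) (Finset.mem_range.2 (by omega))]
      · have hc : l.getD (t - 1 + 2 + 1) 0 < l.getD (t - 1 + 2) 0 := by
          rw [hgD, hgD]; split_ifs <;> first | contradiction | omega
        rw [if_pos hc]
        apply fSYT_congr
        intro j
        rw [getD_decRow, hgD, hgD, getD_family]
        split_ifs <;> first | contradiction | omega
      · intro i hi hine
        rw [Finset.mem_range] at hi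
        have hc : ¬ l.getD (i + 2 + 1) 0 < l.getD (i + 2) 0 := by
          rw [hgD, hgD]; split_ifs <;> first | contradiction | omega
        rw [if_neg hc]
    · rw [if_neg ht]
      have ht0 : t = 0 := by omega
      subst ht0
      simp
  rw [e0, e1, e2]
  ring
lemma factQ_succ (k : ℕ) : (((k + 1).factorial : ℕ) : ℚ) = ((k : ℚ) + 1) * (k.factorial : ℚ) := by
  rw [Nat.factorial_succ]; push_cast; ring

lemma factQ_ne (k : ℕ) : ((k.factorial : ℕ) : ℚ) ≠ 0 :=
  Nat.cast_ne_zero.mpr (Nat.factorial_ne_zero k)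

set_option maxHeartbeats 2000000 in
lemma Ff_formula : ∀ (n d b' t : ℕ), 2 * b' + d + t = n →
    (fSYT ((b' + 1 + d) :: (b' + 1) :: List.replicate t 1) : ℚ)
      = ((2 * b' + d + t + 2).factorial : ℚ) * ((d : ℚ) + 1) /
        (((b' : ℚ) + (d : ℚ) + (t : ℚ) + 2) * ((b' : ℚ) + (t : ℚ) + 1) *
          ((b' + 1 + d).factorial : ℚ) * (b'.factorial : ℚ) * (t.factorial : ℚ)) := by
  intro n
  induction n using Nat.strong_induction_on with
  | _ n IH =>
  intro d b' t hn
  have hno : ¬(1 ≤ (0 : ℕ)) := by omega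
  rcases d with _ | d₀ <;> rcases b' with _ | b₀ <;> rcases t with _ | t₀
  -- Case 1 : d = 0, b' = 0, t = 0
  · have hbr := family_branch 0 0 0
    rw [if_neg hno, if_neg hno, if_neg hno, if_pos (show (0:ℕ) = 0 from rfl)] at hbr
    rw [hbr]
    push_cast
    norm_num [show Nat.factorial 2 = 2 from rfl, show Nat.factorial 1 = 1 from rfl,
      show Nat.factorial 0 = 1 from rfl]
  -- Case 2 : d = 0, b' = 0, t = t₀ + 1
  · have hbr := family_branch 0 0 (t₀ + 1)
    rw [if_neg hno, if_neg hno, if_neg (show ¬((t₀ + 1 : ℕ) = 0) from by omega),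
      if_pos (show 1 ≤ t₀ + 1 from by omega), Nat.add_sub_cancel] at hbr
    have ih := IH (n - 1) (by omega) 0 0 t₀ (by omega)
    rw [hbr]
    rw [show 2 * 0 + 0 + (t₀ + 1) + 2 = t₀ + 2 + 1 from by omega, factQ_succ (t₀ + 2),
      factQ_succ t₀]
    rw [show 2 * 0 + 0 + t₀ + 2 = t₀ + 2 from by omega] at ih
    push_cast
    push_cast at ih
    rw [ih]
    have h1 : ((t₀ : ℚ) + 2) ≠ 0 := by positivity
    have h2 : ((t₀ : ℚ) + 1) ≠ 0 := by positivity
    have h3 : ((t₀ : ℚ) + 3) ≠ 0 := by positivity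
    field_simp [factQ_ne]
    ring
  -- Case 3 : d = 0, b' = b₀ + 1, t = 0
  · have hbr := family_branch 0 (b₀ + 1) 0
    rw [if_neg hno, if_pos (show 1 ≤ b₀ + 1 from by omega), if_neg hno] at hbr
    rw [show b₀ + 1 + 1 + 0 = b₀ + 1 + 1 from by omega] at hbr
    rw [show b₀ + 1 + 1 + 0 = b₀ + 1 + 1 from by omega]
    have ih := IH (n - 1) (by omega) 1 b₀ 0 (by omega)
    rw [hbr]
    rw [show 2 * (b₀ + 1) + 0 + 0 + 2 = 2 * b₀ + 3 + 1 from by omega, factQ_succ (2 * b₀ + 3),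
      factQ_succ b₀, Nat.factorial_zero]
    rw [show 2 * b₀ + 1 + 0 + 2 = 2 * b₀ + 3 from by omega, Nat.factorial_zero] at ih
    push_cast
    push_cast at ih
    rw [ih]
    have h1 : ((b₀ : ℚ) + 3) ≠ 0 := by positivity
    have h2 : ((b₀ : ℚ) + 2) ≠ 0 := by positivity
    have h3 : ((b₀ : ℚ) + 1) ≠ 0 := by positivity
    field_simp [factQ_ne]
    ring
  -- Case 4 : d = 0, b' = b₀ + 1, t = t₀ + 1
  · have hbr := family_branch 0 (b₀ + 1) (t₀ + 1)
    rw [if_neg hno, if_pos (show 1 ≤ b₀ + 1 from by omega),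
      if_pos (show 1 ≤ t₀ + 1 from by omega), Nat.add_sub_cancel] at hbr
    rw [show b₀ + 1 + 1 + 0 = b₀ + 1 + 1 from by omega] at hbr
    rw [show b₀ + 1 + 1 + 0 = b₀ + 1 + 1 from by omega]
    have ih2 := IH (n - 1) (by omega) 1 b₀ (t₀ + 1) (by omega)
    have ih3 := IH (n - 1) (by omega) 0 (b₀ + 1) t₀ (by omega)
    rw [show b₀ + 1 + 1 + 0 = b₀ + 1 + 1 from by omega] at ih3
    rw [hbr]
    rw [show 2 * (b₀ + 1) + 0 + (t₀ + 1) + 2 = 2 * b₀ + t₀ + 4 + 1 from by omega,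
      factQ_succ (2 * b₀ + t₀ + 4), factQ_succ b₀, factQ_succ t₀]
    rw [show 2 * b₀ + 1 + (t₀ + 1) + 2 = 2 * b₀ + t₀ + 4 from by omega, factQ_succ t₀] at ih2
    rw [show 2 * (b₀ + 1) + 0 + t₀ + 2 = 2 * b₀ + t₀ + 4 from by omega, factQ_succ b₀] at ih3
    push_cast
    push_cast at ih2 ih3
    rw [ih2, ih3]
    have h1 : ((b₀ : ℚ) + (t₀ : ℚ) + 4) ≠ 0 := by positivity
    have h2 : ((b₀ : ℚ) + (t₀ : ℚ) + 3) ≠ 0 := by positivity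
    have h3 : ((b₀ : ℚ) + (t₀ : ℚ) + 2) ≠ 0 := by positivity
    have h4 : ((b₀ : ℚ) + 1) ≠ 0 := by positivity
    have h5 : ((t₀ : ℚ) + 1) ≠ 0 := by positivity
    field_simp [factQ_ne]
    ring
  -- Case 5 : d = d₀ + 1, b' = 0, t = 0
  · have hbr := family_branch (d₀ + 1) 0 0
    rw [if_pos (show 1 ≤ d₀ + 1 from by omega), if_neg hno, if_neg hno,
      if_pos (show (0:ℕ) = 0 from rfl)] at hbr
    rw [show 0 + (d₀ + 1) = d₀ + 1 from by omega,
      show 0 + 1 + (d₀ + 1) = d₀ + 2 from by omega] at hbr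
    rw [show 0 + 1 + (d₀ + 1) = d₀ + 2 from by omega]
    have ih := IH (n - 1) (by omega) d₀ 0 0 (by omega)
    rw [show 0 + 1 + d₀ = d₀ + 1 from by omega] at ih
    rw [hbr]
    rw [show 2 * 0 + (d₀ + 1) + 0 + 2 = d₀ + 2 + 1 from by omega, factQ_succ (d₀ + 2),
      show d₀ + 2 = d₀ + 1 + 1 from by omega, factQ_succ (d₀ + 1), Nat.factorial_zero]
    rw [show 2 * 0 + d₀ + 0 + 2 = d₀ + 1 + 1 from by omega, factQ_succ (d₀ + 1),
      Nat.factorial_zero] at ih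
    push_cast
    push_cast at ih
    rw [ih]
    have h1 : ((d₀ : ℚ) + 2) ≠ 0 := by positivity
    have h2 : ((d₀ : ℚ) + 1) ≠ 0 := by positivity
    have h3 : ((d₀ : ℚ) + 3) ≠ 0 := by positivity
    field_simp [factQ_ne]
    ring
  -- Case 6 : d = d₀ + 1, b' = 0, t = t₀ + 1
  · have hbr := family_branch (d₀ + 1) 0 (t₀ + 1)
    rw [if_pos (show 1 ≤ d₀ + 1 from by omega), if_neg hno,
      if_neg (show ¬((t₀ + 1 : ℕ) = 0) from by omega),
      if_pos (show 1 ≤ t₀ + 1 from by omega), Nat.add_sub_cancel] at hbr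
    rw [show 0 + (d₀ + 1) = d₀ + 1 from by omega,
      show 0 + 1 + (d₀ + 1) = d₀ + 2 from by omega] at hbr
    rw [show 0 + 1 + (d₀ + 1) = d₀ + 2 from by omega]
    have ih1 := IH (n - 1) (by omega) d₀ 0 (t₀ + 1) (by omega)
    rw [show 0 + 1 + d₀ = d₀ + 1 from by omega] at ih1
    have ih3 := IH (n - 1) (by omega) (d₀ + 1) 0 t₀ (by omega)
    rw [show 0 + 1 + (d₀ + 1) = d₀ + 2 from by omega] at ih3
    rw [hbr]
    rw [show 2 * 0 + (d₀ + 1) + (t₀ + 1) + 2 = d₀ + t₀ + 3 + 1 from by omega,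
      factQ_succ (d₀ + t₀ + 3),
      show d₀ + 2 = d₀ + 1 + 1 from by omega, factQ_succ (d₀ + 1), factQ_succ t₀]
    rw [show 2 * 0 + d₀ + (t₀ + 1) + 2 = d₀ + t₀ + 3 from by omega, factQ_succ t₀] at ih1
    rw [show 2 * 0 + (d₀ + 1) + t₀ + 2 = d₀ + t₀ + 3 from by omega,
      show d₀ + 2 = d₀ + 1 + 1 from by omega, factQ_succ (d₀ + 1)] at ih3
    push_cast
    push_cast at ih1 ih3
    rw [ih1, ih3]
    have h1 : ((d₀ : ℚ) + (t₀ : ℚ) + 4) ≠ 0 := by positivity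
    have h2 : ((d₀ : ℚ) + (t₀ : ℚ) + 3) ≠ 0 := by positivity
    have h3 : ((t₀ : ℚ) + 2) ≠ 0 := by positivity
    have h4 : ((t₀ : ℚ) + 1) ≠ 0 := by positivity
    have h5 : ((d₀ : ℚ) + 1) ≠ 0 := by positivity
    have h6 : ((d₀ : ℚ) + 2) ≠ 0 := by positivity
    field_simp [factQ_ne]
    ring
  -- Case 7 : d = d₀ + 1, b' = b₀ + 1, t = 0
  · have hbr := family_branch (d₀ + 1) (b₀ + 1) 0
    rw [if_pos (show 1 ≤ d₀ + 1 from by omega),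
      if_pos (show 1 ≤ b₀ + 1 from by omega), if_neg hno] at hbr
    rw [show b₀ + 1 + (d₀ + 1) = b₀ + d₀ + 2 from by omega,
      show b₀ + 1 + 1 + (d₀ + 1) = b₀ + d₀ + 3 from by omega] at hbr
    rw [show b₀ + 1 + 1 + (d₀ + 1) = b₀ + d₀ + 3 from by omega]
    have ih1 := IH (n - 1) (by omega) d₀ (b₀ + 1) 0 (by omega)
    rw [show b₀ + 1 + 1 + d₀ = b₀ + d₀ + 2 from by omega] at ih1
    have ih2 := IH (n - 1) (by omega) (d₀ + 2) b₀ 0 (by omega)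
    rw [show b₀ + 1 + (d₀ + 2) = b₀ + d₀ + 3 from by omega] at ih2
    rw [hbr]
    rw [show 2 * (b₀ + 1) + (d₀ + 1) + 0 + 2 = 2 * b₀ + d₀ + 4 + 1 from by omega,
      factQ_succ (2 * b₀ + d₀ + 4),
      show b₀ + d₀ + 3 = b₀ + d₀ + 2 + 1 from by omega, factQ_succ (b₀ + d₀ + 2),
      factQ_succ b₀, Nat.factorial_zero]
    rw [show 2 * (b₀ + 1) + d₀ + 0 + 2 = 2 * b₀ + d₀ + 4 from by omega, factQ_succ b₀,
      Nat.factorial_zero] at ih1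
    rw [show 2 * b₀ + (d₀ + 2) + 0 + 2 = 2 * b₀ + d₀ + 4 from by omega,
      show b₀ + d₀ + 3 = b₀ + d₀ + 2 + 1 from by omega, factQ_succ (b₀ + d₀ + 2),
      Nat.factorial_zero] at ih2
    push_cast
    push_cast at ih1 ih2
    rw [ih1, ih2]
    have h1 : ((b₀ : ℚ) + (d₀ : ℚ) + 4) ≠ 0 := by positivity
    have h2 : ((b₀ : ℚ) + (d₀ : ℚ) + 3) ≠ 0 := by positivity
    have h3 : ((b₀ : ℚ) + (d₀ : ℚ) + 2) ≠ 0 := by positivity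
    have h4 : ((b₀ : ℚ) + 2) ≠ 0 := by positivity
    have h5 : ((b₀ : ℚ) + 1) ≠ 0 := by positivity
    field_simp [factQ_ne]
    ring
  -- Case 8 : d = d₀ + 1, b' = b₀ + 1, t = t₀ + 1
  · have hbr := family_branch (d₀ + 1) (b₀ + 1) (t₀ + 1)
    rw [if_pos (show 1 ≤ d₀ + 1 from by omega),
      if_pos (show 1 ≤ b₀ + 1 from by omega),
      if_pos (show 1 ≤ t₀ + 1 from by omega), Nat.add_sub_cancel] at hbr
    rw [show b₀ + 1 + (d₀ + 1) = b₀ + d₀ + 2 from by omega,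
      show b₀ + 1 + 1 + (d₀ + 1) = b₀ + d₀ + 3 from by omega] at hbr
    rw [show b₀ + 1 + 1 + (d₀ + 1) = b₀ + d₀ + 3 from by omega]
    have ih1 := IH (n - 1) (by omega) d₀ (b₀ + 1) (t₀ + 1) (by omega)
    rw [show b₀ + 1 + 1 + d₀ = b₀ + d₀ + 2 from by omega] at ih1
    have ih2 := IH (n - 1) (by omega) (d₀ + 2) b₀ (t₀ + 1) (by omega)
    rw [show b₀ + 1 + (d₀ + 2) = b₀ + d₀ + 3 from by omega] at ih2
    have ih3 := IH (n - 1) (by omega) (d₀ + 1) (b₀ + 1) t₀ (by omega)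
    rw [show b₀ + 1 + 1 + (d₀ + 1) = b₀ + d₀ + 3 from by omega] at ih3
    rw [hbr]
    rw [show 2 * (b₀ + 1) + (d₀ + 1) + (t₀ + 1) + 2 = 2 * b₀ + d₀ + t₀ + 5 + 1 from by omega,
      factQ_succ (2 * b₀ + d₀ + t₀ + 5),
      show b₀ + d₀ + 3 = b₀ + d₀ + 2 + 1 from by omega, factQ_succ (b₀ + d₀ + 2),
      factQ_succ b₀, factQ_succ t₀]
    rw [show 2 * (b₀ + 1) + d₀ + (t₀ + 1) + 2 = 2 * b₀ + d₀ + t₀ + 5 from by omega,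
      factQ_succ b₀, factQ_succ t₀] at ih1
    rw [show 2 * b₀ + (d₀ + 2) + (t₀ + 1) + 2 = 2 * b₀ + d₀ + t₀ + 5 from by omega,
      show b₀ + d₀ + 3 = b₀ + d₀ + 2 + 1 from by omega, factQ_succ (b₀ + d₀ + 2),
      factQ_succ t₀] at ih2
    rw [show 2 * (b₀ + 1) + (d₀ + 1) + t₀ + 2 = 2 * b₀ + d₀ + t₀ + 5 from by omega,
      show b₀ + d₀ + 3 = b₀ + d₀ + 2 + 1 from by omega, factQ_succ (b₀ + d₀ + 2),
      factQ_succ b₀] at ih3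
    push_cast
    push_cast at ih1 ih2 ih3
    rw [ih1, ih2, ih3]
    have h1 : ((b₀:ℚ) + (d₀:ℚ) + (t₀:ℚ) + 5) ≠ 0 := by positivity
    have h2 : ((b₀:ℚ) + (t₀:ℚ) + 3) ≠ 0 := by positivity
    have h3 : ((b₀:ℚ) + (d₀:ℚ) + (t₀:ℚ) + 4) ≠ 0 := by positivity
    have h4 : ((b₀:ℚ) + (t₀:ℚ) + 2) ≠ 0 := by positivity
    have h5 : ((b₀:ℚ) + (d₀:ℚ) + (t₀:ℚ) + 3) ≠ 0 := by positivity
    have h6 : ((b₀:ℚ) + (d₀:ℚ) + 3) ≠ 0 := by positivity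
    have h7 : ((b₀:ℚ) + (d₀:ℚ) + 2) ≠ 0 := by positivity
    field_simp [factQ_ne]
    ring

/-- **Lemma.** For `k ≥ 2`, `m ≥ 4`, the difference
`Δ₃(k,m) = f^{(k,k,1^m)} + f^{(k+1,k+1,1^{m-2})} + f^{(k+2,k+2,1^{m-4})} - f^{(k+2,k,1^{m-2})}`
equals `(2k+m)!/((k+1)!(k+2)! m!) · (k-m+1)(k-m+2)` as rational numbers. -/
theorem Delta3_formula (k m : ℕ) (hk : 2 ≤ k) (hm : 4 ≤ m) :
    (fSYT (k :: k :: List.replicate m 1) : ℚ)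
      + fSYT ((k + 1) :: (k + 1) :: List.replicate (m - 2) 1)
      + fSYT ((k + 2) :: (k + 2) :: List.replicate (m - 4) 1)
      - fSYT ((k + 2) :: k :: List.replicate (m - 2) 1)
    = (Nat.factorial (2 * k + m) : ℚ) /
        (Nat.factorial (k + 1) * Nat.factorial (k + 2) * Nat.factorial m)
        * ((k : ℚ) - m + 1) * ((k : ℚ) - m + 2) := by
  obtain ⟨k', rfl⟩ : ∃ x, k = x + 2 := ⟨k - 2, by omega⟩
  obtain ⟨m', rfl⟩ : ∃ x, m = x + 4 := ⟨m - 4, by omega⟩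
  rw [show m' + 4 - 2 = m' + 2 from by omega, show m' + 4 - 4 = m' from by omega]
  have h1 := Ff_formula (2 * (k' + 1) + 0 + (m' + 4)) 0 (k' + 1) (m' + 4) rfl
  rw [show k' + 1 + 1 + 0 = k' + 2 from by omega, show k' + 1 + 1 = k' + 2 from by omega,
    show 2 * (k' + 1) + 0 + (m' + 4) + 2 = 2 * k' + m' + 8 from by omega] at h1
  have h2 := Ff_formula (2 * (k' + 2) + 0 + (m' + 2)) 0 (k' + 2) (m' + 2) rfl
  rw [show k' + 2 + 1 + 0 = k' + 3 from by omega, show k' + 2 + 1 = k' + 3 from by omega,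
    show 2 * (k' + 2) + 0 + (m' + 2) + 2 = 2 * k' + m' + 8 from by omega] at h2
  have h3 := Ff_formula (2 * (k' + 3) + 0 + m') 0 (k' + 3) m' rfl
  rw [show k' + 3 + 1 + 0 = k' + 4 from by omega, show k' + 3 + 1 = k' + 4 from by omega,
    show 2 * (k' + 3) + 0 + m' + 2 = 2 * k' + m' + 8 from by omega] at h3
  have h4 := Ff_formula (2 * (k' + 1) + 2 + (m' + 2)) 2 (k' + 1) (m' + 2) rfl
  rw [show k' + 1 + 1 + 2 = k' + 4 from by omega, show k' + 1 + 1 = k' + 2 from by omega,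
    show 2 * (k' + 1) + 2 + (m' + 2) + 2 = 2 * k' + m' + 8 from by omega] at h4
  rw [show k' + 2 + 1 = k' + 3 from by omega, show k' + 2 + 2 = k' + 4 from by omega,
    show 2 * (k' + 2) + (m' + 4) = 2 * k' + m' + 8 from by omega]
  rw [h1, h2, h3, h4]
  rw [show k' + 4 = k' + 3 + 1 from by omega, factQ_succ (k' + 3),
    show k' + 3 = k' + 2 + 1 from by omega, factQ_succ (k' + 2),
    show k' + 2 = k' + 1 + 1 from by omega, factQ_succ (k' + 1),
    show m' + 4 = m' + 3 + 1 from by omega, factQ_succ (m' + 3),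
    show m' + 3 = m' + 2 + 1 from by omega, factQ_succ (m' + 2),
    show m' + 2 = m' + 1 + 1 from by omega, factQ_succ (m' + 1), factQ_succ m']
  have e1 : ((k' : ℚ) + (m' : ℚ) + 7) ≠ 0 := by positivity
  have e2 : ((k' : ℚ) + (m' : ℚ) + 6) ≠ 0 := by positivity
  have e3 : ((k' : ℚ) + (m' : ℚ) + 5) ≠ 0 := by positivity
  have e4 : ((k' : ℚ) + (m' : ℚ) + 4) ≠ 0 := by positivity
  have e5 : ((k' : ℚ) + 1) ≠ 0 := by positivity
  have e6 : ((k' : ℚ) + 2) ≠ 0 := by positivity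
  have e7 : ((m' : ℚ) + 1) ≠ 0 := by positivity
  have e8 : ((m' : ℚ) + 2) ≠ 0 := by positivity
  push_cast
  field_simp [factQ_ne]
  ring
end

section
/- Let k > m ≥ 2 be integers with k ≡ m (mod 2), and for an integer j with 0 ≤ j ≤ (k−m)/2 − 1 define the rational number s(j) = ((m+2k)! · (m+2j−k+1) · (m−k+4j+2) · (2j+1)) / ((m+2j+2)! · (k+1)! · (k−2j)!). Then s((k−m)/2 − 1 − j) = −s(j) for all 0 ≤ j ≤ (k−m)/2 − 1, and consequently Σ_{j=0}^{(k−m)/2 − 1} s(j) = 0. -/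
/-- The rational number
`s(j) = (m+2k)! (m+2j-k+1)(m-k+4j+2)(2j+1) / ((m+2j+2)! (k+1)! (k-2j)!)`. -/
def sfun (k m j : ℕ) : ℚ :=
  (Nat.factorial (m + 2 * k) * ((m : ℚ) + 2 * j - k + 1) * ((m : ℚ) - k + 4 * j + 2) *
      (2 * (j : ℚ) + 1)) /
    (Nat.factorial (m + 2 * j + 2) * Nat.factorial (k + 1) * Nat.factorial (k - 2 * j))

/-- Let `k > m ≥ 2` with `k ≡ m (mod 2)`. Then `s((k-m)/2 - 1 - j) = -s(j)` for all
`0 ≤ j ≤ (k-m)/2 - 1`, and consequently `Σ_{j=0}^{(k-m)/2 - 1} s(j) = 0`. -/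
theorem sfun_antisymmetry_and_sum_zero (k m : ℕ) (hm : 2 ≤ m) (hmk : m < k)
    (hpar : k % 2 = m % 2) :
    (∀ j ≤ (k - m) / 2 - 1, sfun k m ((k - m) / 2 - 1 - j) = - sfun k m j) ∧
    ∑ j ∈ Finset.range ((k - m) / 2), sfun k m j = 0 := by
  obtain ⟨d, hd⟩ : ∃ d, k = m + 2 * d := ⟨(k - m) / 2, by omega⟩
  have hd1 : 1 ≤ d := by omega
  have hdd : (k - m) / 2 = d := by omega
  have key : ∀ j ≤ (k - m) / 2 - 1, sfun k m ((k - m) / 2 - 1 - j) = - sfun k m j := by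
    intro j hj
    rw [hdd] at hj ⊢
    have h1 : m + 2 * (d - 1 - j) + 2 = k - 2 * j := by omega
    have h2 : k - 2 * (d - 1 - j) = m + 2 * j + 2 := by omega
    have h3 : ((d - 1 - j : ℕ) : ℚ) = (d : ℚ) - 1 - j := by
      have h : (d - 1 - j) + j + 1 = d := by omega
      have := congrArg (fun n : ℕ => (n : ℚ)) h
      push_cast at this
      linarith
    have hk : (k : ℚ) = (m : ℚ) + 2 * d := by exact_mod_cast congrArg (fun n : ℕ => (n : ℚ)) hd
    unfold sfun
    rw [h1, h2, h3, hk, ← neg_div, div_eq_div_iff (by positivity) (by positivity)]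
    ring
  refine ⟨key, ?_⟩
  have hrefl := Finset.sum_range_reflect (fun j => sfun k m j) ((k - m) / 2)
  have hneg : ∑ j ∈ Finset.range ((k - m) / 2), sfun k m ((k - m) / 2 - 1 - j)
      = ∑ j ∈ Finset.range ((k - m) / 2), (- sfun k m j) := by
    apply Finset.sum_congr rfl
    intro j hjr
    exact key j (by simp only [Finset.mem_range] at hjr; omega)
  rw [hneg, Finset.sum_neg_distrib] at hrefl
  linarith
end

section
/- For nonnegative integers x, y, z with z ≥ 2, the identity h(x,y,z) = h(z−2, x+1, y+1) holds, where h(x,y,z) = ((x+y+z)! / ((x+2)! · (y+1)! · z!)) · (x−y+1) · (x−z+2) · (y−z+1) is viewed as a rational number. -/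
/-- The rational number `h(x,y,z) = (x+y+z)!/((x+2)!(y+1)! z!) · (x-y+1)(x-z+2)(y-z+1)`;
when `(x,y,z)` is a partition it equals `f^{(x,y,z)}` by the hook length formula. -/
def hfun (x y z : ℕ) : ℚ :=
  (Nat.factorial (x + y + z) : ℚ) /
      (Nat.factorial (x + 2) * Nat.factorial (y + 1) * Nat.factorial z)
    * ((x : ℚ) - y + 1) * ((x : ℚ) - z + 2) * ((y : ℚ) - z + 1)

/-- For nonnegative integers `x, y, z` with `z ≥ 2`, `h(x,y,z) = h(z-2, x+1, y+1)`. -/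
theorem hfun_swap (x y z : ℕ) (hz : 2 ≤ z) :
    hfun x y z = hfun (z - 2) (x + 1) (y + 1) := by
  obtain ⟨w, rfl⟩ := Nat.exists_eq_add_of_le hz
  unfold hfun
  have h1 : 2 + w - 2 = w := by omega
  have h2 : x + y + (2 + w) = w + (x + 1) + (y + 1) := by omega
  have h3 : 2 + w = w + 2 := by omega
  rw [h1, h2, h3]
  push_cast
  ring
end
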